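/- arXiv:2411.03366 — 7 statements merged into one kernel-verified Lean document; each statement's English description precedes it below -/
import Mathlib

section
/- For any subset I ⊆ {1,…,m}, the family (a_i)_{i ∈ I} is linearly independent in W* if and only if the set {γ_j : j ∉ I} spans V*. -/
set_option maxHeartbeats 1000000


/-- Gale duality: for any `I ⊆ {1,…,m}`, the family `(a i)_{i ∈ I}`
is linearly independent in `W*` iff `{γ j : j ∉ I}` spans `V*`. -/
theorem stmt1 {V : Type*} [NormedAddCommGroup V] [NormedSpace ℝ V]
    [FiniteDimensional ℝ V] {m : ℕ} (γ : Fin m → (V →L[ℝ] ℝ))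
    (hspan : Submodule.span ℝ (Set.range γ) = ⊤)
    (W : Submodule ℝ (Fin m → ℝ))
    (hW : ∀ y : Fin m → ℝ, y ∈ W ↔ ∑ i, y i • γ i = 0)
    (a : Fin m → (W →L[ℝ] ℝ))
    (ha : ∀ (i : Fin m) (w : W), a i w = (w : Fin m → ℝ) i)
    (I : Set (Fin m)) :
    LinearIndependent ℝ (fun i : I => a i.1) ↔
      Submodule.span ℝ (γ '' Iᶜ) = ⊤ := by
  classical
  haveI : Fintype ↥I := I.toFinite.fintype
  constructor
  · intro hli
    by_contra hne
    obtain ⟨φ, φ0, hφ⟩ := Submodule.exists_dual_map_eq_bot_of_lt_top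
      (p := Submodule.span ℝ (γ '' Iᶜ)) (lt_top_iff_ne_top.mpr hne) inferInstance
    have hφ0 : ∀ j ∉ I, φ (γ j) = 0 := by
      intro j hj
      have : φ (γ j) ∈ (Submodule.span ℝ (γ '' Iᶜ)).map φ :=
        Submodule.mem_map_of_mem (Submodule.subset_span ⟨j, hj, rfl⟩)
      simpa [hφ] using this
    have hsum : ∑ i : I, φ (γ i.1) • a i.1 = 0 := by
      ext w
      have hw : ∑ j, (w : Fin m → ℝ) j • γ j = 0 := (hW w).mp w.2
      have key : ∑ j, φ (γ j) * (w : Fin m → ℝ) j = 0 := by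
        have := congrArg φ hw
        simpa [map_sum, map_smul, smul_eq_mul, mul_comm] using this
      have h1 : (∑ i : I, φ (γ i.1) • a i.1) w
          = ∑ i : I, φ (γ i.1) * (w : Fin m → ℝ) i.1 := by
        simp [ContinuousLinearMap.sum_apply, ha, smul_eq_mul]
      have h2 : ∑ i : I, φ (γ i.1) * (w : Fin m → ℝ) i.1
          = ∑ j ∈ I.toFinset, φ (γ j) * (w : Fin m → ℝ) j :=
        (Finset.sum_set_coe (f := fun j => φ (γ j) * (w : Fin m → ℝ) j) I)
      have h3 : ∑ j ∈ I.toFinset, φ (γ j) * (w : Fin m → ℝ) j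
          = ∑ j, φ (γ j) * (w : Fin m → ℝ) j := by
        refine Finset.sum_subset (Finset.subset_univ _) ?_
        intro j _ hj
        rw [hφ0 j (by simpa using hj), zero_mul]
      simp [h1, h2, h3, key]
    have hz := (Fintype.linearIndependent_iff (v := fun i : I => a i.1)).mp hli
      (fun i : I => φ (γ i.1)) hsum
    have hallz : ∀ j, φ (γ j) = 0 := by
      intro j
      by_cases hj : j ∈ I
      · exact hz ⟨j, hj⟩
      · exact hφ0 j hj
    apply φ0
    ext x
    have hx : x ∈ Submodule.span ℝ (Set.range γ) := hspan ▸ Submodule.mem_top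
    refine Submodule.span_induction ?_ ?_ ?_ ?_ hx
    · rintro _ ⟨j, rfl⟩; exact hallz j
    · simp
    · intro u v _ _ hu hv; simp [hu, hv]
    · intro r u _ hu; simp [hu]
  · intro hsp
    refine (Fintype.linearIndependent_iff (v := fun i : I => a i.1)).mpr ?_
    intro g hg i
    -- express γ i as a combination of the γ j, j ∉ I
    have hmem : γ i.1 ∈ Submodule.span ℝ (Set.range fun j : ↥Iᶜ => γ j.1) := by
      rw [← Set.image_eq_range, hsp]; exact Submodule.mem_top
    obtain ⟨c, hc⟩ := (Submodule.mem_span_range_iff_exists_fun ℝ).mp hmem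
    set d : Fin m → ℝ := fun k => if h : k ∈ Iᶜ then c ⟨k, h⟩ else 0 with hd
    have hdsum : ∑ k, d k • γ k = γ i.1 := by
      rw [← hc]
      have e1 : ∑ j : ↥Iᶜ, c j • γ j.1 = ∑ j : ↥Iᶜ, d j.1 • γ j.1 :=
        Finset.sum_congr rfl fun j _ => by
          simp only [hd]; rw [dif_pos j.2]
      rw [e1, Finset.sum_set_coe (f := fun k => d k • γ k) Iᶜ]
      refine (Finset.sum_subset (Finset.subset_univ _) ?_).symm
      intro k _ hk
      have hknot : k ∉ Iᶜ := by simpa using hk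
      simp only [hd]
      rw [dif_neg hknot, zero_smul]
    set y : Fin m → ℝ := fun k => (if k = i.1 then 1 else 0) - d k with hy
    have hyW : y ∈ W := by
      rw [hW]
      have : ∑ k, y k • γ k = (∑ k, (if k = i.1 then (1:ℝ) else 0) • γ k)
          - ∑ k, d k • γ k := by
        rw [← Finset.sum_sub_distrib]
        exact Finset.sum_congr rfl fun k _ => by rw [hy]; exact sub_smul (R := ℝ) (M := V →L[ℝ] ℝ) _ _ _
      rw [this, hdsum]
      simp
    have hgy := congrArg (fun f : W →L[ℝ] ℝ => f ⟨y, hyW⟩) hg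
    have hdI : ∀ k ∈ I, d k = 0 := by
      intro k hk
      simp [hd, hk]
    have hterm : ∀ j : I, g j * y j.1 = g j * (if j.1 = i.1 then (1:ℝ) else 0) := by
      intro j
      rw [hy]
      simp [hdI j.1 j.2]
    have : ∑ j : I, g j * (if j.1 = i.1 then (1:ℝ) else 0) = 0 := by
      have h0 := hgy
      simp only [ContinuousLinearMap.sum_apply, ContinuousLinearMap.smul_apply,
        ha, ContinuousLinearMap.zero_apply, smul_eq_mul] at h0
      calc ∑ j : I, g j * (if j.1 = i.1 then (1:ℝ) else 0)
          = ∑ j : I, g j * y j.1 := Finset.sum_congr rfl fun j _ => (hterm j).symm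
        _ = 0 := h0
    have hi : ∑ j : I, g j * (if j.1 = i.1 then (1:ℝ) else 0) = g i := by
      have hiff : ∀ j : I, j.1 = i.1 ↔ j = i := fun j => Subtype.ext_iff.symm
      simp only [hiff, mul_ite, mul_one, mul_zero]
      simp
    rw [hi] at this
    exact this
end

section
/- Let K be a simplicial complex on {1,…,m}. The following two conditions are equivalent: (b) for any two distinct I, J ∈ K, relint(cone{a_i : i ∈ I}) ∩ relint(cone{a_j : j ∈ J}) = ∅; (c) for any I, J ∈ K, relint(cone{γ_i : i ∉ I}) ∩ relint(cone{γ_j : j ∉ J}) ≠ ∅. -/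
open Set
set_option maxHeartbeats 1600000
set_option linter.unusedSectionVars false
set_option linter.unusedVariables false

/-- The cone generated by the vectors `v i` for `i ∈ I`: all nonnegative linear
combinations of the `v i`, `i ∈ I`. -/
def coneOf {E : Type*} [AddCommGroup E] [Module ℝ E] {m : ℕ}
    (v : Fin m → E) (I : Set (Fin m)) : Set E :=
  {x | ∃ c : Fin m → ℝ, (∀ i, 0 ≤ c i) ∧ (∀ i ∉ I, c i = 0) ∧ x = ∑ i, c i • v i}

section Relint
variable {V : Type*} [NormedAddCommGroup V] [NormedSpace ℝ V] [FiniteDimensional ℝ V] {m : ℕ}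
  (v : Fin m → V) (I : Set (Fin m))

lemma coneOf_subset_span : coneOf v I ⊆ (Submodule.span ℝ (v '' I) : Set V) := by
  rintro x ⟨c, _, hc0, rfl⟩
  refine Submodule.sum_mem _ fun i _ => ?_
  by_cases hi : i ∈ I
  · exact Submodule.smul_mem _ _ (Submodule.subset_span ⟨i, hi, rfl⟩)
  · simp [hc0 i hi]

lemma zero_mem_coneOf : (0 : V) ∈ coneOf v I :=
  ⟨0, fun _ => le_refl 0, fun _ _ => rfl, by simp⟩

lemma mem_coneOf_self {i : Fin m} (hi : i ∈ I) : v i ∈ coneOf v I := by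
  classical
  refine ⟨fun j => if j = i then 1 else 0, ?_, ?_, ?_⟩
  · intro j; by_cases h : j = i <;> simp [h]
  · intro j hj; simp only [ite_eq_right_iff]; rintro rfl; exact absurd hi hj
  · simp [ite_smul]

lemma affineSpan_coneOf :
    affineSpan ℝ (coneOf v I) = (Submodule.span ℝ (v '' I)).toAffineSubspace := by
  apply SetLike.ext'
  have h0 : insert (0:V) (coneOf v I) = coneOf v I := insert_eq_self.2 (zero_mem_coneOf v I)
  have h1 := affineSpan_insert_zero (k := ℝ) (coneOf v I)
  rw [h0] at h1
  rw [h1]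
  have h2 : Submodule.span ℝ (coneOf v I) = Submodule.span ℝ (v '' I) := by
    apply le_antisymm
    · rw [Submodule.span_le]; exact coneOf_subset_span v I
    · rw [Submodule.span_le]
      rintro x ⟨i, hi, rfl⟩
      exact Submodule.subset_span (mem_coneOf_self v I hi)
  rw [h2]
  rfl

lemma mem_intrinsicInterior_coneOf_iff (x : V) :
    x ∈ intrinsicInterior ℝ (coneOf v I) ↔
      x ∈ Submodule.span ℝ (v '' I) ∧
        ∃ ε > 0, ∀ y ∈ Submodule.span ℝ (v '' I), dist y x < ε → y ∈ coneOf v I := by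
  rw [intrinsicInterior, affineSpan_coneOf]
  constructor
  · rintro ⟨⟨y, hy⟩, hmem, rfl⟩
    refine ⟨hy, ?_⟩
    rw [mem_interior_iff_mem_nhds, Metric.mem_nhds_iff] at hmem
    obtain ⟨ε, hε, hball⟩ := hmem
    refine ⟨ε, hε, fun z hz hdz => ?_⟩
    have : (⟨z, hz⟩ : (Submodule.span ℝ (v '' I)).toAffineSubspace) ∈ Metric.ball
        (⟨y, hy⟩ : (Submodule.span ℝ (v '' I)).toAffineSubspace) ε := by
      rw [Metric.mem_ball]
      exact lt_of_eq_of_lt (Subtype.dist_eq _ _) hdz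
    exact hball this
  · rintro ⟨hx, ε, hε, h⟩
    refine ⟨⟨x, hx⟩, ?_, rfl⟩
    rw [mem_interior_iff_mem_nhds, Metric.mem_nhds_iff]
    refine ⟨ε, hε, fun z hz => ?_⟩
    rw [Metric.mem_ball, Subtype.dist_eq] at hz
    exact h z z.2 hz
lemma sum_support_coe [Fintype ↥I] (c : Fin m → ℝ) (hc : ∀ i ∉ I, c i = 0) :
    ∑ i, c i • v i = ∑ i : ↥I, c ↑i • v ↑i := by
  classical
  rw [Finset.sum_set_coe (f := fun i => c i • v i)]
  symm
  apply Finset.sum_subset (Finset.subset_univ _)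
  intro i _ hi
  rw [Set.mem_toFinset] at hi
  simp [hc i hi]

lemma relint_coneOf (x : V) :
    x ∈ intrinsicInterior ℝ (coneOf v I) ↔
      ∃ c : Fin m → ℝ, (∀ i ∈ I, 0 < c i) ∧ (∀ i ∉ I, c i = 0) ∧ x = ∑ i, c i • v i := by
  classical
  haveI : Fintype ↥I := (Set.toFinite I).fintype
  set L : Submodule ℝ V := Submodule.span ℝ (v '' I) with hL
  rw [mem_intrinsicInterior_coneOf_iff]
  set φ : (↥I → ℝ) →ₗ[ℝ] V := Fintype.linearCombination ℝ (fun i : ↥I => v ↑i) with hφ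
  have hφapp : ∀ cc : ↥I → ℝ, φ cc = ∑ i : ↥I, cc i • v ↑i := fun cc =>
    rfl
  have hrange : LinearMap.range φ = L := by
    rw [hφ, Fintype.range_linearCombination, hL, ← Set.image_eq_range]
  have hφL : ∀ cc : ↥I → ℝ, φ cc ∈ L := fun cc => hrange ▸ LinearMap.mem_range_self φ cc
  set ψ : (↥I → ℝ) →L[ℝ] L := (φ.codRestrict L hφL).toContinuousLinearMap with hψ
  have hψcoe : ∀ cc, ((ψ cc : L) : V) = φ cc := fun cc => rfl
  have hsurj : Function.Surjective ψ := by
    rintro ⟨y, hy⟩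
    rw [← hrange] at hy
    obtain ⟨cc, hcc⟩ := hy
    exact ⟨cc, Subtype.ext (by rw [hψcoe, hcc])⟩
  constructor
  · rintro ⟨hxL, ε, hε, hball⟩
    -- take p with coefficients 1 on I
    set cp : Fin m → ℝ := fun i => if i ∈ I then 1 else 0 with hcp
    set p : V := ∑ i, cp i • v i with hp
    have hpL : p ∈ L := coneOf_subset_span v I
      ⟨cp, fun i => by by_cases h : i ∈ I <;> simp [hcp, h], fun i hi => by simp [hcp, hi], rfl⟩
    set t : ℝ := ε / (2 * (‖x - p‖ + 1)) with hts
    have hden : (0:ℝ) < ‖x - p‖ + 1 := by positivity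
    have ht : 0 < t := by positivity
    set y : V := x + t • (x - p) with hy
    have hyL : y ∈ L := L.add_mem hxL (L.smul_mem _ (L.sub_mem hxL hpL))
    have hdist : dist y x < ε := by
      rw [dist_eq_norm]
      have : y - x = t • (x - p) := by rw [hy]; abel
      rw [this, norm_smul, Real.norm_eq_abs, abs_of_pos ht]
      calc t * ‖x - p‖ ≤ t * (‖x - p‖ + 1) := by nlinarith [norm_nonneg (x - p)]
        _ = ε / 2 := by rw [hts]; field_simp
        _ < ε := by linarith
    obtain ⟨d, hd0, hdsupp, hdsum⟩ := hball y hyL hdist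
    have h1t : (0:ℝ) < 1 + t := by linarith
    refine ⟨fun i => (1 + t)⁻¹ * (d i + t * cp i), ?_, ?_, ?_⟩
    · intro i hi
      show 0 < (1 + t)⁻¹ * (d i + t * cp i)
      have hcp1 : cp i = 1 := by simp [hcp, hi]
      rw [hcp1]
      have := hd0 i
      positivity
    · intro i hi
      show (1 + t)⁻¹ * (d i + t * cp i) = 0
      rw [hdsupp i hi]
      simp [hcp, hi]
    · have key : y + t • p = (1 + t) • x := by rw [hy]; module
      calc x = (1 + t)⁻¹ • ((1 + t) • x) := by
              rw [smul_smul, inv_mul_cancel₀ (ne_of_gt h1t), one_smul]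
        _ = (1 + t)⁻¹ • (y + t • p) := by rw [key]
        _ = (1 + t)⁻¹ • (∑ i, d i • v i + t • ∑ i, cp i • v i) := by rw [← hdsum, hp]
        _ = ∑ i, ((1 + t)⁻¹ * (d i + t * cp i)) • v i := by
              rw [Finset.smul_sum, ← Finset.sum_add_distrib, Finset.smul_sum]
              apply Finset.sum_congr rfl
              intro i _
              module
  · rintro ⟨c, hcpos, hcsupp, rfl⟩
    have hmemcone : (∑ i, c i • v i) ∈ coneOf v I := by
      refine ⟨c, fun i => ?_, hcsupp, rfl⟩
      by_cases h : i ∈ I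
      · exact le_of_lt (hcpos i h)
      · rw [hcsupp i h]
    refine ⟨coneOf_subset_span v I hmemcone, ?_⟩
    set O : Set (↥I → ℝ) := {cc | ∀ i, 0 < cc i} with hO
    have hOopen : IsOpen O := by
      have : O = Set.pi univ fun _ => Ioi (0:ℝ) := by ext; simp [hO, Set.mem_pi]
      rw [this]
      exact isOpen_set_pi finite_univ fun _ _ => isOpen_Ioi
    have homap : IsOpenMap ψ := ContinuousLinearMap.isOpenMap ψ hsurj
    have himopen : IsOpen (ψ '' O) := homap O hOopen
    have hxL : (∑ i, c i • v i) ∈ L := coneOf_subset_span v I hmemcone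
    have hxmem : (⟨∑ i, c i • v i, hxL⟩ : L) ∈ ψ '' O := by
      refine ⟨fun i : ↥I => c ↑i, fun i => hcpos ↑i i.2, ?_⟩
      apply Subtype.ext
      rw [hψcoe, hφapp, ← sum_support_coe v I c hcsupp]
    rw [Metric.isOpen_iff] at himopen
    obtain ⟨ε, hε, hball⟩ := himopen _ hxmem
    refine ⟨ε, hε, fun y hyL hdy => ?_⟩
    have : (⟨y, hyL⟩ : L) ∈ Metric.ball (⟨∑ i, c i • v i, hxL⟩ : L) ε := by
      rw [Metric.mem_ball]
      exact lt_of_eq_of_lt (Subtype.dist_eq _ _) hdy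
    obtain ⟨dd, hddpos, hdd⟩ := hball this
    refine ⟨fun i => if h : i ∈ I then dd ⟨i, h⟩ else 0, ?_, ?_, ?_⟩
    · intro i
      by_cases h : i ∈ I
      · simp only [dif_pos h]; exact le_of_lt (hddpos ⟨i, h⟩)
      · simp [dif_neg h]
    · intro i hi; simp [dif_neg hi]
    · have hyval : (↑(ψ dd) : V) = y := congrArg Subtype.val hdd
      rw [hψcoe, hφapp] at hyval
      rw [← hyval]
      rw [sum_support_coe v I _ (fun i hi => dif_neg hi)]
      apply Finset.sum_congr rfl
      intro i _
      rw [dif_pos i.2]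
end Relint

variable {n : ℕ}

def annSub (T : Submodule ℝ (Fin n → ℝ)) : Submodule ℝ (Fin n → ℝ) where
  carrier := {x | ∀ w ∈ T, ∑ i, x i * w i = 0}
  add_mem' := by
    intro x y hx hy w hw
    simp only [Pi.add_apply, add_mul, Finset.sum_add_distrib]
    rw [hx w hw, hy w hw, add_zero]
  zero_mem' := by intro w hw; simp
  smul_mem' := by
    intro r x hx w hw
    simp only [Pi.smul_apply, smul_eq_mul, mul_assoc, ← Finset.mul_sum]
    rw [hx w hw, mul_zero]

lemma mem_annSub {T : Submodule ℝ (Fin n → ℝ)} {x : Fin n → ℝ} :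
    x ∈ annSub T ↔ ∀ w ∈ T, ∑ i, x i * w i = 0 := Iff.rfl

lemma clm_zero_of_lt {E : Type*} [NormedAddCommGroup E] [NormedSpace ℝ E]
    (f : E →L[ℝ] ℝ) (T : Submodule ℝ E) (u : ℝ) (h : ∀ b ∈ T, u < f b) :
    ∀ b ∈ T, f b = 0 := by
  intro b hb
  by_contra hfb
  have hmem : ((u - 1) / f b) • b ∈ T := T.smul_mem _ hb
  have := h _ hmem
  rw [map_smul, smul_eq_mul, div_mul_cancel₀ _ hfb] at this
  linarith

lemma clm_eq_sum (f : (Fin n → ℝ) →L[ℝ] ℝ) (w : Fin n → ℝ) :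
    f w = ∑ i, w i * f (fun j => if i = j then 1 else 0) := by
  classical
  conv_lhs => rw [pi_eq_sum_univ w]
  rw [map_sum]
  apply Finset.sum_congr rfl
  intro i _
  rw [map_smul, smul_eq_mul]

lemma annSub_annSub (T : Submodule ℝ (Fin n → ℝ)) : annSub (annSub T) = T := by
  apply le_antisymm
  · intro x hx
    by_contra hxT
    have hTclosed : IsClosed (T : Set (Fin n → ℝ)) := T.closed_of_finiteDimensional
    obtain ⟨f, u, hfx, hfT⟩ := geometric_hahn_banach_point_closed T.convex hTclosed hxT
    have hfzero : ∀ b ∈ T, f b = 0 := clm_zero_of_lt f T u hfT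
    have hu0 : u < 0 := by have := hfT 0 T.zero_mem; rwa [map_zero] at this
    set y : Fin n → ℝ := fun i => f (fun j => if i = j then 1 else 0) with hy
    have hyann : y ∈ annSub T := by
      intro w hw
      have : ∑ i, y i * w i = f w := by
        rw [clm_eq_sum f w]; apply Finset.sum_congr rfl; intro i _; ring
      rw [this, hfzero w hw]
    have := hx y hyann
    rw [show ∑ i, x i * y i = f x from by rw [clm_eq_sum f x]] at this
    linarith
  · intro x hx y hy
    have := hy x hx
    rw [← this]
    apply Finset.sum_congr rfl
    intro i _; ring

lemma annSub_sup (A B : Submodule ℝ (Fin n → ℝ)) :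
    annSub (A ⊔ B) = annSub A ⊓ annSub B := by
  apply le_antisymm
  · intro x hx
    exact ⟨fun w hw => hx w (Submodule.mem_sup_left hw),
           fun w hw => hx w (Submodule.mem_sup_right hw)⟩
  · rintro x ⟨hxA, hxB⟩ w hw
    obtain ⟨p, hp, q, hq, rfl⟩ := Submodule.mem_sup.1 hw
    simp only [Pi.add_apply, mul_add, Finset.sum_add_distrib]
    rw [hxA p hp, hxB q hq, add_zero]

lemma annSub_inf (A B : Submodule ℝ (Fin n → ℝ)) :
    annSub (A ⊓ B) = annSub A ⊔ annSub B := by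
  conv_lhs => rw [← annSub_annSub A, ← annSub_annSub B]
  rw [← annSub_sup, annSub_annSub]

lemma gordan (T : Submodule ℝ (Fin n → ℝ)) (S : Set (Fin n))
    (h : ¬ ∃ w ∈ T, ∀ i ∈ S, 0 < w i) :
    ∃ x ∈ annSub T, (∀ i, 0 ≤ x i) ∧ (∃ i ∈ S, 0 < x i) ∧ (∀ i ∉ S, x i = 0) := by
  classical
  by_contra hcon
  set Δ : Set (Fin n → ℝ) :=
    {y | (∀ i, 0 ≤ y i) ∧ (∀ i ∉ S, y i = 0) ∧ ∑ i, y i = 1} with hΔ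
  have key : ∀ z ∈ Δ, z ∉ annSub T := by
    rintro z ⟨hz0, hzS, hzsum⟩ hzann
    obtain ⟨i, hipos⟩ : ∃ i, 0 < z i := by
      by_contra hno
      push_neg at hno
      have : ∑ i, z i ≤ 0 := Finset.sum_nonpos fun i _ => hno i
      linarith
    have hiS : i ∈ S := by
      by_contra hiS
      rw [hzS i hiS] at hipos
      exact lt_irrefl 0 hipos
    exact hcon ⟨z, hzann, hz0, ⟨i, hiS, hipos⟩, hzS⟩
  have hdisj : Disjoint Δ (annSub T : Set (Fin n → ℝ)) :=
    Set.disjoint_left.mpr key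
  have hΔconv : Convex ℝ Δ := by
    rintro x ⟨hx0, hxS, hxsum⟩ y ⟨hy0, hyS, hysum⟩ a b ha hb hab
    refine ⟨fun i => add_nonneg (mul_nonneg ha (hx0 i)) (mul_nonneg hb (hy0 i)),
      fun i hi => ?_, ?_⟩
    · simp [Pi.add_apply, hxS i hi, hyS i hi]
    · simp only [Pi.add_apply, Pi.smul_apply, smul_eq_mul, Finset.sum_add_distrib,
        ← Finset.mul_sum, hxsum, hysum]
      linarith
  have hΔcl : IsClosed Δ := by
    have h1 : IsClosed {y : Fin n → ℝ | ∀ i, 0 ≤ y i} := by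
      have he : {y : Fin n → ℝ | ∀ i, 0 ≤ y i} = ⋂ i, {y | 0 ≤ y i} := by ext; simp
      rw [he]
      exact isClosed_iInter fun i => isClosed_le continuous_const (continuous_apply i)
    have h2 : IsClosed {y : Fin n → ℝ | ∀ i ∉ S, y i = 0} := by
      have : {y : Fin n → ℝ | ∀ i ∉ S, y i = 0} =
          ⋂ i, ⋂ (_ : i ∉ S), {y | y i = 0} := by ext; simp
      rw [this]
      exact isClosed_iInter fun i => isClosed_iInter fun _ =>
        isClosed_eq (continuous_apply i) continuous_const
    have h3 : IsClosed {y : Fin n → ℝ | ∑ i, y i = 1} :=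
      isClosed_eq (by continuity) continuous_const
    have : Δ = {y : Fin n → ℝ | ∀ i, 0 ≤ y i} ∩ ({y | ∀ i ∉ S, y i = 0} ∩ {y | ∑ i, y i = 1}) := by
      ext z; simp only [hΔ, Set.mem_setOf_eq, Set.mem_inter_iff]
    rw [this]
    exact h1.inter (h2.inter h3)
  have hΔcomp : IsCompact Δ := by
    have hsub : Δ ⊆ stdSimplex ℝ (Fin n) := by
      rintro z ⟨hz0, _, hzsum⟩; exact ⟨hz0, hzsum⟩
    exact (isCompact_stdSimplex ℝ (Fin n)).of_isClosed_subset hΔcl hsub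
  obtain ⟨f, u, v', hfΔ, huv, hfann⟩ :=
    geometric_hahn_banach_compact_closed hΔconv hΔcomp (annSub T).convex
      (annSub T).closed_of_finiteDimensional hdisj
  have hfzero : ∀ b ∈ annSub T, f b = 0 := clm_zero_of_lt f (annSub T) v' hfann
  have hv0 : v' < 0 := by have := hfann 0 (annSub T).zero_mem; rwa [map_zero] at this
  set w : Fin n → ℝ := fun i => -(f (fun j => if i = j then 1 else 0)) with hw
  have hwT : w ∈ T := by
    rw [← annSub_annSub T]
    apply (annSub (annSub T)).neg_mem
    intro z hz
    have : ∑ i, (fun i => f (fun j => if i = j then 1 else 0)) i * z i = f z := by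
      rw [clm_eq_sum f z]; apply Finset.sum_congr rfl; intro i _; ring
    rw [this, hfzero z hz]
  refine h ⟨w, hwT, fun i hi => ?_⟩
  have heΔ : (fun j => if i = j then (1:ℝ) else 0) ∈ Δ := by
    refine ⟨fun j => by positivity, fun j hj => ?_, by simp⟩
    · have : i ≠ j := fun he => hj (he ▸ hi)
      simp [this]
  have := hfΔ _ heΔ
  have : f (fun j => if i = j then (1:ℝ) else 0) < 0 := by linarith
  simpa [hw] using this

def zeroOn (Z : Set (Fin n)) : Submodule ℝ (Fin n → ℝ) where
  carrier := {w | ∀ i ∈ Z, w i = 0}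
  add_mem' := fun hx hy i hi => by simp [Pi.add_apply, hx i hi, hy i hi]
  zero_mem' := fun i _ => rfl
  smul_mem' := fun r x hx i hi => by simp [Pi.smul_apply, hx i hi]

lemma mem_zeroOn {Z : Set (Fin n)} {w : Fin n → ℝ} :
    w ∈ zeroOn Z ↔ ∀ i ∈ Z, w i = 0 := Iff.rfl

lemma annSub_zeroOn (Z : Set (Fin n)) : annSub (zeroOn Z) = zeroOn Zᶜ := by
  classical
  apply le_antisymm
  · intro x hx j hj
    have hje : (fun i => if i = j then (1:ℝ) else 0) ∈ zeroOn Z := by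
      intro i hi
      have : i ≠ j := fun he => hj (he ▸ hi)
      simp [this]
    have := hx _ hje
    simpa [mul_ite, Finset.sum_ite_eq'] using this
  · intro x hx w hw
    apply Finset.sum_eq_zero
    intro i _
    by_cases hi : i ∈ Z
    · rw [hw i hi, mul_zero]
    · rw [hx i hi, zero_mul]

lemma altThm (U : Submodule ℝ (Fin n → ℝ)) (S Z : Set (Fin n)) (hd : ∀ i ∈ S, i ∉ Z)
    (h : ¬ ∃ w ∈ U, (∀ i ∈ S, 0 < w i) ∧ (∀ i ∈ Z, w i = 0)) :
    ∃ x ∈ annSub U, (∀ i ∈ S, 0 ≤ x i) ∧ (∃ i ∈ S, 0 < x i) ∧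
      (∀ i, i ∉ S → i ∉ Z → x i = 0) := by
  have h' : ¬ ∃ w ∈ U ⊓ zeroOn Z, ∀ i ∈ S, 0 < w i := by
    rintro ⟨w, ⟨hwU, hwZ⟩, hwS⟩
    exact h ⟨w, hwU, hwS, hwZ⟩
  obtain ⟨x, hxann, hx0, hxstrict, hxsupp⟩ := gordan (U ⊓ zeroOn Z) S h'
  rw [annSub_inf, annSub_zeroOn] at hxann
  obtain ⟨p, hp, q, hq, rfl⟩ := Submodule.mem_sup.1 hxann
  refine ⟨p, hp, fun i hi => ?_, ?_, fun i hiS hiZ => ?_⟩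
  · have hqz : q i = 0 := hq i (hd i hi)
    have h0 : (0:ℝ) ≤ p i + q i := hx0 i
    rwa [hqz, add_zero] at h0
  · obtain ⟨i, hiS, hipos⟩ := hxstrict
    have hqz : q i = 0 := hq i (hd i hiS)
    have h0 : (0:ℝ) < p i + q i := hipos
    exact ⟨i, hiS, by rwa [hqz, add_zero] at h0⟩
  · have hqz : q i = 0 := hq i hiZ
    have h0 : p i + q i = 0 := hxsupp i hiS
    rwa [hqz, add_zero] at h0

lemma alt2 (U : Submodule ℝ (Fin n → ℝ)) (Sp Sn Z : Set (Fin n))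
    (hpn : ∀ i ∈ Sp, i ∉ Sn) (hpz : ∀ i ∈ Sp, i ∉ Z) (hnz : ∀ i ∈ Sn, i ∉ Z)
    (h : ¬ ∃ w ∈ U, (∀ i ∈ Sp, 0 < w i) ∧ (∀ i ∈ Sn, w i < 0) ∧ (∀ i ∈ Z, w i = 0)) :
    ∃ x ∈ annSub U, (∀ i ∈ Sp, 0 ≤ x i) ∧ (∀ i ∈ Sn, x i ≤ 0) ∧
      ((∃ i ∈ Sp, 0 < x i) ∨ (∃ i ∈ Sn, x i < 0)) ∧
      (∀ i, i ∉ Sp → i ∉ Sn → i ∉ Z → x i = 0) := by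
  classical
  set ε : Fin n → ℝ := fun i => if i ∈ Sn then -1 else 1 with hε
  have hεp : ∀ i ∈ Sp, ε i = 1 := fun i hi => by simp [hε, hpn i hi]
  have hεn : ∀ i ∈ Sn, ε i = -1 := fun i hi => by simp [hε, hi]
  have hεne : ∀ i, ε i ≠ 0 := by
    intro i; rw [hε]; dsimp only; split <;> norm_num
  set fl : (Fin n → ℝ) →ₗ[ℝ] (Fin n → ℝ) :=
    { toFun := fun w i => ε i * w i
      map_add' := fun x y => by funext i; simp [Pi.add_apply, mul_add]
      map_smul' := fun r x => by
        funext i; simp only [Pi.smul_apply, smul_eq_mul, RingHom.id_apply]; ring } with hfl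
  have hflapp : ∀ (w : Fin n → ℝ) (i : Fin n), fl w i = ε i * w i := fun _ _ => rfl
  set U' := Submodule.map fl U with hU'
  have h' : ¬ ∃ u ∈ U', (∀ i ∈ Sp ∪ Sn, 0 < u i) ∧ (∀ i ∈ Z, u i = 0) := by
    rintro ⟨u, hu, huS, huZ⟩
    obtain ⟨w, hwU, rfl⟩ := hu
    refine h ⟨w, hwU, fun i hi => ?_, fun i hi => ?_, fun i hi => ?_⟩
    · have h1 := huS i (Or.inl hi)
      rwa [hflapp, hεp i hi, one_mul] at h1
    · have h1 := huS i (Or.inr hi)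
      rw [hflapp, hεn i hi] at h1
      linarith
    · have h1 := huZ i hi
      rw [hflapp] at h1
      exact (mul_eq_zero.1 h1).elim (fun hc => absurd hc (hεne i)) id
  obtain ⟨x', hx'ann, hx'0, hx'strict, hx'supp⟩ := altThm U' (Sp ∪ Sn) Z
    (fun i hi => hi.elim (hpz i) (hnz i)) h'
  refine ⟨fun i => ε i * x' i, ?_, fun i hi => ?_, fun i hi => ?_, ?_, fun i h1 h2 h3 => ?_⟩
  · intro w hw
    have h1 := hx'ann (fl w) ⟨w, hw, rfl⟩
    rw [← h1]
    apply Finset.sum_congr rfl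
    intro i _
    rw [hflapp]
    ring
  · show 0 ≤ ε i * x' i
    rw [hεp i hi, one_mul]; exact hx'0 i (Or.inl hi)
  · show ε i * x' i ≤ 0
    rw [hεn i hi]
    have := hx'0 i (Or.inr hi)
    linarith
  · obtain ⟨i, hiS, hipos⟩ := hx'strict
    rcases hiS with hi | hi
    · exact Or.inl ⟨i, hi, by show 0 < ε i * x' i; rw [hεp i hi, one_mul]; exact hipos⟩
    · refine Or.inr ⟨i, hi, ?_⟩
      show ε i * x' i < 0
      rw [hεn i hi]
      linarith
  · show ε i * x' i = 0
    rw [hx'supp i (fun hc => hc.elim h1 h2) h3, mul_zero]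

/-- For a simplicial complex `K` on `{1,…,m}`, the relative
interiors of the cones `cone{a i : i ∈ I}`, `I ∈ K`, are pairwise disjoint iff
the relative interiors of the Gale dual cones `cone{γ i : i ∉ I}`, `I ∈ K`,
pairwise intersect. -/
theorem stmt3 {V : Type*} [NormedAddCommGroup V] [NormedSpace ℝ V]
    [FiniteDimensional ℝ V] {m : ℕ} (γ : Fin m → (V →L[ℝ] ℝ))
    (hspan : Submodule.span ℝ (Set.range γ) = ⊤)
    (W : Submodule ℝ (Fin m → ℝ))
    (hW : ∀ y : Fin m → ℝ, y ∈ W ↔ ∑ i, y i • γ i = 0)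
    (a : Fin m → (W →L[ℝ] ℝ))
    (ha : ∀ (i : Fin m) (w : W), a i w = (w : Fin m → ℝ) i)
    (K : Set (Set (Fin m))) (hKempty : ∅ ∈ K)
    (hKdown : ∀ I ∈ K, ∀ J ⊆ I, J ∈ K) :
    (∀ I ∈ K, ∀ J ∈ K, I ≠ J →
        intrinsicInterior ℝ (coneOf a I) ∩ intrinsicInterior ℝ (coneOf a J) = ∅) ↔
      ∀ I ∈ K, ∀ J ∈ K,
        (intrinsicInterior ℝ (coneOf γ Iᶜ) ∩
          intrinsicInterior ℝ (coneOf γ Jᶜ)).Nonempty := by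
  classical
  haveI : FiniteDimensional ℝ (V →L[ℝ] ℝ) :=
    (LinearMap.toContinuousLinearMap : (V →ₗ[ℝ] ℝ) ≃ₗ[ℝ] (V →L[ℝ] ℝ)).finiteDimensional
  haveI : FiniteDimensional ℝ (↥W →L[ℝ] ℝ) :=
    (LinearMap.toContinuousLinearMap : (↥W →ₗ[ℝ] ℝ) ≃ₗ[ℝ] (↥W →L[ℝ] ℝ)).finiteDimensional
  -- the "Gale dual" linear map
  set G : V →ₗ[ℝ] (Fin m → ℝ) :=
    { toFun := fun x => fun i => γ i x
      map_add' := fun x y => by funext i; simp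
      map_smul' := fun r x => by funext i; simp } with hG
  have hGapp : ∀ (x : V) (i : Fin m), G x i = γ i x := fun _ _ => rfl
  have happγ : ∀ (e : Fin m → ℝ) (x : V), (∑ i, e i • γ i) x = ∑ i, e i * γ i x := by
    intro e x
    rw [ContinuousLinearMap.sum_apply]
    exact Finset.sum_congr rfl fun i _ => by
      rw [ContinuousLinearMap.smul_apply, smul_eq_mul]
  have happa : ∀ (e : Fin m → ℝ) (w : ↥W),
      (∑ i, e i • a i) w = ∑ i, e i * (w : Fin m → ℝ) i := by
    intro e w
    rw [ContinuousLinearMap.sum_apply]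
    exact Finset.sum_congr rfl fun i _ => by
      rw [ContinuousLinearMap.smul_apply, smul_eq_mul, ha i w]
  have hannW : annSub W = LinearMap.range G := by
    have hWval : W = annSub (LinearMap.range G) := by
      ext y
      rw [hW, mem_annSub]
      constructor
      · intro hy w hw
        obtain ⟨x, rfl⟩ := hw
        have h1 : (∑ i, y i • γ i) x = 0 := by rw [hy]; rfl
        rw [happγ] at h1
        rw [← h1]
        exact Finset.sum_congr rfl fun i _ => by rw [hGapp]
      · intro hall
        ext x
        rw [happγ, ContinuousLinearMap.zero_apply]
        have := hall (G x) ⟨x, rfl⟩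
        rw [← this]
        exact Finset.sum_congr rfl fun i _ => by rw [hGapp]
    rw [hWval, annSub_annSub]
  have hsum_a_zero : ∀ e : Fin m → ℝ, (∑ i, e i • a i = 0) ↔ e ∈ annSub W := by
    intro e
    rw [mem_annSub]
    constructor
    · intro h0 w hw
      have := congrArg (fun f : ↥W →L[ℝ] ℝ => f ⟨w, hw⟩) h0
      simp only [ContinuousLinearMap.zero_apply] at this
      rw [happa] at this
      exact this
    · intro hall
      ext w
      rw [happa, ContinuousLinearMap.zero_apply]
      exact hall (w : Fin m → ℝ) w.2
  -- E1 : characterization for the `a`-cones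
  have E1 : ∀ I J : Set (Fin m),
      ((intrinsicInterior ℝ (coneOf a I)) ∩ (intrinsicInterior ℝ (coneOf a J))).Nonempty ↔
      ∃ x : V, (∀ i ∈ I \ J, 0 < γ i x) ∧ (∀ i ∈ J \ I, γ i x < 0) ∧
        (∀ i ∉ I ∪ J, γ i x = 0) := by
    intro I J
    constructor
    · rintro ⟨z, hzI, hzJ⟩
      obtain ⟨c, hcpos, hcsupp, hzc⟩ := (relint_coneOf a I z).1 hzI
      obtain ⟨d, hdpos, hdsupp, hzd⟩ := (relint_coneOf a J z).1 hzJ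
      have hmemann : (fun i => c i - d i) ∈ annSub W := by
        intro w hw
        have h1 : (∑ i, c i • a i) ⟨w, hw⟩ = (∑ i, d i • a i) ⟨w, hw⟩ := by
          rw [← hzc, ← hzd]
        rw [happa, happa] at h1
        have h2 : ∀ i, (c i - d i) * w i = c i * w i - d i * w i := fun i => by ring
        rw [Finset.sum_congr rfl fun i _ => h2 i, Finset.sum_sub_distrib, h1, sub_self]
      rw [hannW] at hmemann
      obtain ⟨x, hGx⟩ := hmemann
      have hxi : ∀ i, γ i x = c i - d i := fun i => by
        rw [← hGapp x i, hGx]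
      refine ⟨x, fun i hi => ?_, fun i hi => ?_, fun i hi => ?_⟩
      · rw [hxi, hdsupp i hi.2, sub_zero]; exact hcpos i hi.1
      · rw [hxi]
        have h1 := hcsupp i hi.2
        have h2 := hdpos i hi.1
        linarith
      · rw [hxi, hcsupp i (fun h => hi (Or.inl h)), hdsupp i (fun h => hi (Or.inr h)), sub_zero]
    · rintro ⟨x, hpos, hneg, hzero⟩
      set c : Fin m → ℝ := fun i =>
        if i ∈ I then (if i ∈ J then max (γ i x) 0 + 1 else γ i x) else 0 with hc
      set d : Fin m → ℝ := fun i => c i - γ i x with hd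
      have hcpos : ∀ i ∈ I, 0 < c i := by
        intro i hi
        show 0 < (if i ∈ I then (if i ∈ J then max (γ i x) 0 + 1 else γ i x) else 0)
        rw [if_pos hi]
        by_cases hj : i ∈ J
        · rw [if_pos hj]; have := le_max_right (γ i x) (0:ℝ); linarith
        · rw [if_neg hj]; exact hpos i ⟨hi, hj⟩
      have hcsupp : ∀ i ∉ I, c i = 0 := by
        intro i hi
        show (if i ∈ I then _ else 0) = 0
        rw [if_neg hi]
      have hdpos : ∀ i ∈ J, 0 < d i := by
        intro i hj
        show 0 < c i - γ i x
        by_cases hi : i ∈ I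
        · have : c i = max (γ i x) 0 + 1 := by
            show (if i ∈ I then (if i ∈ J then max (γ i x) 0 + 1 else γ i x) else 0) = _
            rw [if_pos hi, if_pos hj]
          rw [this]
          have := le_max_left (γ i x) (0:ℝ)
          linarith
        · rw [hcsupp i hi]
          have := hneg i ⟨hj, hi⟩
          linarith
      have hdsupp : ∀ i ∉ J, d i = 0 := by
        intro i hj
        show c i - γ i x = 0
        by_cases hi : i ∈ I
        · have : c i = γ i x := by
            show (if i ∈ I then (if i ∈ J then max (γ i x) 0 + 1 else γ i x) else 0) = _
            rw [if_pos hi, if_neg hj]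
          rw [this, sub_self]
        · rw [hcsupp i hi, hzero i (fun h => h.elim hi hj), sub_zero]
      have hGmem : (fun i => γ i x) ∈ annSub W := by
        rw [hannW]; exact ⟨x, rfl⟩
      have heq : ∑ i, c i • a i = ∑ i, d i • a i := by
        apply ContinuousLinearMap.ext
        intro w
        rw [happa, happa]
        have h0 : ∑ i, (γ i x) * (w : Fin m → ℝ) i = 0 := hGmem _ w.2
        have h2 : ∀ i, d i * (w : Fin m → ℝ) i =
            c i * (w : Fin m → ℝ) i - (γ i x) * (w : Fin m → ℝ) i := fun i => by
          show (c i - γ i x) * _ = _; ring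
        rw [Finset.sum_congr rfl fun i _ => h2 i, Finset.sum_sub_distrib, h0, sub_zero]
      refine ⟨∑ i, c i • a i, (relint_coneOf a I _).2 ⟨c, hcpos, hcsupp, rfl⟩,
        (relint_coneOf a J _).2 ⟨d, hdpos, hdsupp, heq⟩⟩
  -- E2 : characterization for the `γ`-cones on complements
  have E2 : ∀ I J : Set (Fin m),
      ((intrinsicInterior ℝ (coneOf γ Iᶜ)) ∩ (intrinsicInterior ℝ (coneOf γ Jᶜ))).Nonempty ↔
      ∃ w ∈ W, (∀ i ∈ J \ I, 0 < w i) ∧ (∀ i ∈ I \ J, w i < 0) ∧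
        (∀ i ∈ I ∩ J, w i = 0) := by
    intro I J
    constructor
    · rintro ⟨z, hzI, hzJ⟩
      obtain ⟨c, hcpos, hcsupp, hzc⟩ := (relint_coneOf γ Iᶜ z).1 hzI
      obtain ⟨d, hdpos, hdsupp, hzd⟩ := (relint_coneOf γ Jᶜ z).1 hzJ
      have hcI : ∀ i ∈ I, c i = 0 := fun i hi => hcsupp i (fun h => h hi)
      have hdJ : ∀ i ∈ J, d i = 0 := fun i hi => hdsupp i (fun h => h hi)
      have hwW : (fun i => c i - d i) ∈ W := by
        rw [hW]
        apply ContinuousLinearMap.ext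
        intro x'
        rw [happγ, ContinuousLinearMap.zero_apply]
        have h1 : (∑ i, c i • γ i) x' = (∑ i, d i • γ i) x' := by rw [← hzc, ← hzd]
        rw [happγ, happγ] at h1
        have h2 : ∀ i, (c i - d i) * γ i x' = c i * γ i x' - d i * γ i x' := fun i => by ring
        rw [Finset.sum_congr rfl fun i _ => h2 i, Finset.sum_sub_distrib, h1, sub_self]
      refine ⟨fun i => c i - d i, hwW, fun i hi => ?_, fun i hi => ?_, fun i hi => ?_⟩
      · show 0 < c i - d i
        have h1 := hdJ i hi.1
        have h2 := hcpos i hi.2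
        linarith
      · show c i - d i < 0
        have h1 := hcI i hi.1
        have h2 := hdpos i hi.2
        linarith
      · show c i - d i = 0
        rw [hcI i hi.1, hdJ i hi.2, sub_zero]
    · rintro ⟨w, hwW, hpos, hneg, hzero⟩
      set c : Fin m → ℝ := fun i =>
        if i ∈ I then 0 else (if i ∈ J then w i else |w i| + 1) with hc
      set d : Fin m → ℝ := fun i => c i - w i with hd
      have hcpos : ∀ i ∈ Iᶜ, 0 < c i := by
        intro i hi
        show 0 < (if i ∈ I then 0 else (if i ∈ J then w i else |w i| + 1))
        rw [if_neg hi]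
        by_cases hj : i ∈ J
        · rw [if_pos hj]; exact hpos i ⟨hj, hi⟩
        · rw [if_neg hj]; positivity
      have hcsupp : ∀ i ∉ Iᶜ, c i = 0 := by
        intro i hi
        rw [Set.notMem_compl_iff] at hi
        show (if i ∈ I then 0 else _) = 0
        rw [if_pos hi]
      have hdpos : ∀ i ∈ Jᶜ, 0 < d i := by
        intro i hj
        show 0 < c i - w i
        by_cases hi : i ∈ I
        · have hci : c i = 0 := hcsupp i (by rwa [Set.notMem_compl_iff])
          have h2 := hneg i ⟨hi, hj⟩
          linarith
        · have hci : c i = |w i| + 1 := by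
            show (if i ∈ I then 0 else (if i ∈ J then w i else |w i| + 1)) = _
            rw [if_neg hi, if_neg hj]
          rw [hci]
          have := le_abs_self (w i)
          linarith
      have hdsupp : ∀ i ∉ Jᶜ, d i = 0 := by
        intro i hj
        rw [Set.notMem_compl_iff] at hj
        show c i - w i = 0
        by_cases hi : i ∈ I
        · have hci : c i = 0 := hcsupp i (by rwa [Set.notMem_compl_iff])
          rw [hci, hzero i ⟨hi, hj⟩, sub_zero]
        · have hci : c i = w i := by
            show (if i ∈ I then 0 else (if i ∈ J then w i else |w i| + 1)) = _
            rw [if_neg hi, if_pos hj]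
          rw [hci, sub_self]
      have hzsum : ∑ i, w i • γ i = 0 := (hW w).1 hwW
      have heq : ∑ i, c i • γ i = ∑ i, d i • γ i := by
        apply ContinuousLinearMap.ext
        intro x'
        rw [happγ, happγ]
        have h0 : ∑ i, w i * γ i x' = 0 := by
          have h1 : (∑ i, w i • γ i) x' = 0 := by rw [hzsum]; rfl
          rwa [happγ] at h1
        have h2 : ∀ i, d i * γ i x' = c i * γ i x' - w i * γ i x' := fun i => by
          show (c i - w i) * _ = _; ring
        rw [Finset.sum_congr rfl fun i _ => h2 i, Finset.sum_sub_distrib, h0, sub_zero]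
      refine ⟨∑ i, c i • γ i, (relint_coneOf γ Iᶜ _).2 ⟨c, hcpos, hcsupp, rfl⟩,
        (relint_coneOf γ Jᶜ _).2 ⟨d, hdpos, hdsupp, heq⟩⟩
  constructor
  · -- (b) → (c)
    intro hb I hI J hJ
    rw [E2 I J]
    by_contra hnw
    obtain ⟨x, hxann, hxp, hxn, hxstrict, hxsupp⟩ :=
      alt2 W (J \ I) (I \ J) (I ∩ J)
        (fun i hi hc => hi.2 hc.1) (fun i hi hc => hi.2 hc.1) (fun i hi hc => hi.2 hc.2) hnw
    rw [hannW] at hxann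
    obtain ⟨xv, hGxv⟩ := hxann
    have hxi : ∀ i, γ i xv = x i := fun i => by rw [← hGapp xv i, hGxv]
    set N : Set (Fin m) := {i | i ∈ I \ J ∧ γ i xv < 0} with hN
    set P : Set (Fin m) := {i | i ∈ J \ I ∧ 0 < γ i xv} with hP
    set I' : Set (Fin m) := (I ∩ J) ∪ N with hI'
    set J' : Set (Fin m) := (I ∩ J) ∪ P with hJ'
    have hI'K : I' ∈ K := hKdown I hI I' (by
      rintro i (hi | hi)
      · exact hi.1
      · exact hi.1.1)
    have hJ'K : J' ∈ K := hKdown J hJ J' (by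
      rintro i (hi | hi)
      · exact hi.2
      · exact hi.1.1)
    have hne' : J' ≠ I' := by
      rcases hxstrict with ⟨i, hi, hpos⟩ | ⟨i, hi, hneg⟩
      · -- i ∈ J \ I with 0 < x i, so i ∈ P ⊆ J', i ∉ I'
        have hiP : i ∈ P := ⟨hi, by rw [hxi]; exact hpos⟩
        intro he
        have : i ∈ I' := he ▸ (Or.inr hiP : i ∈ J')
        rcases this with h | h
        · exact hi.2 h.1
        · exact hi.2 h.1.1
      · have hiN : i ∈ N := ⟨hi, by rw [hxi]; exact hneg⟩
        intro he
        have : i ∈ J' := he ▸ (Or.inr hiN : i ∈ I')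
        rcases this with h | h
        · exact hi.2 h.2
        · exact hi.2 h.1.1
    have hempty := hb J' hJ'K I' hI'K hne'
    have hmem : ((intrinsicInterior ℝ (coneOf a J')) ∩
        (intrinsicInterior ℝ (coneOf a I'))).Nonempty := by
      rw [E1 J' I']
      refine ⟨xv, fun i hi => ?_, fun i hi => ?_, fun i hi => ?_⟩
      · -- i ∈ J' \ I'
        rcases hi.1 with h | h
        · exact absurd (Or.inl h : i ∈ I') hi.2
        · exact h.2
      · rcases hi.1 with h | h
        · exact absurd (Or.inl h : i ∈ J') hi.2
        · exact h.2
      · -- i ∉ J' ∪ I'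
        have hiIJ : i ∉ I ∩ J := fun h => hi (Or.inl (Or.inl h))
        have hiP : i ∉ P := fun h => hi (Or.inl (Or.inr h))
        have hiN : i ∉ N := fun h => hi (Or.inr (Or.inr h))
        by_cases hiI : i ∈ I
        · have hiJ : i ∉ J := fun h => hiIJ ⟨hiI, h⟩
          have hle : x i ≤ 0 := hxn i ⟨hiI, hiJ⟩
          have hnlt : ¬ γ i xv < 0 := fun h => hiN ⟨⟨hiI, hiJ⟩, h⟩
          rw [hxi] at hnlt ⊢
          have h3 := not_lt.1 hnlt
          linarith
        · by_cases hiJ : i ∈ J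
          · have hge : 0 ≤ x i := hxp i ⟨hiJ, hiI⟩
            have : ¬ 0 < γ i xv := fun h => hiP ⟨⟨hiJ, hiI⟩, h⟩
            rw [hxi]
            rw [hxi] at this
            linarith [lt_or_ge 0 (x i)]
          · rw [hxi]
            exact hxsupp i (fun h => hiJ h.1) (fun h => hiI h.1) (fun h => hiI h.1)
    obtain ⟨z, hz⟩ := hmem
    rw [hempty] at hz
    exact hz
  · -- (c) → (b)
    intro hc I hI J hJ hne
    by_contra hne'
    have hnonempty : ((intrinsicInterior ℝ (coneOf a I)) ∩
        (intrinsicInterior ℝ (coneOf a J))).Nonempty :=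
      Set.nonempty_iff_ne_empty.2 hne'
    obtain ⟨xv, hγpos, hγneg, hγzero⟩ := (E1 I J).1 hnonempty
    obtain ⟨w, hwW, hwpos, hwneg, hwzero⟩ := (E2 I J).1 (hc I hI J hJ)
    have h0 : ∑ i, w i * γ i xv = 0 := by
      have := (hW w).1 hwW
      have h1 : (∑ i, w i • γ i) xv = 0 := by rw [this]; rfl
      rwa [happγ] at h1
    have hle : ∀ i : Fin m, w i * γ i xv ≤ 0 := by
      intro i
      by_cases hiI : i ∈ I
      · by_cases hiJ : i ∈ J
        · rw [hwzero i ⟨hiI, hiJ⟩, zero_mul]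
        · exact le_of_lt (mul_neg_of_neg_of_pos (hwneg i ⟨hiI, hiJ⟩) (hγpos i ⟨hiI, hiJ⟩))
      · by_cases hiJ : i ∈ J
        · exact le_of_lt (mul_neg_of_pos_of_neg (hwpos i ⟨hiJ, hiI⟩) (hγneg i ⟨hiJ, hiI⟩))
        · rw [hγzero i (fun h => h.elim hiI hiJ), mul_zero]
    have hstrict : ∃ i₀ : Fin m, w i₀ * γ i₀ xv < 0 := by
      have hIJdiff : ∃ i₀, (i₀ ∈ I ∧ i₀ ∉ J) ∨ (i₀ ∈ J ∧ i₀ ∉ I) := by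
        by_contra hno
        push_neg at hno
        apply hne
        ext i
        have := hno i
        tauto
      obtain ⟨i₀, hi₀⟩ := hIJdiff
      refine ⟨i₀, ?_⟩
      rcases hi₀ with ⟨h1, h2⟩ | ⟨h1, h2⟩
      · exact mul_neg_of_neg_of_pos (hwneg i₀ ⟨h1, h2⟩) (hγpos i₀ ⟨h1, h2⟩)
      · exact mul_neg_of_pos_of_neg (hwpos i₀ ⟨h1, h2⟩) (hγneg i₀ ⟨h1, h2⟩)
    obtain ⟨i₀, hi₀⟩ := hstrict
    have : ∑ i, w i * γ i xv < ∑ i : Fin m, (0:ℝ) :=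
      Finset.sum_lt_sum (fun i _ => hle i) ⟨i₀, Finset.mem_univ _, hi₀⟩
    rw [Finset.sum_const, smul_zero] at this
    linarith
end

section
/- Let K be a simplicial complex on {1,…,m}. The restriction of the exponential action of V to U(K) is free, i.e., v • x = x for some x ∈ U(K) implies v = 0, if and only if for every I ∈ K the family (a_i)_{i ∈ I} is linearly independent in W*. -/
open Module

-- key lemma: a vector c annihilating W is of the form (γ i v)_i
lemma key {V : Type*} [NormedAddCommGroup V] [NormedSpace ℝ V]
    [FiniteDimensional ℝ V] {m : ℕ} (γ : Fin m → (V →L[ℝ] ℝ))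
    (W : Submodule ℝ (Fin m → ℝ))
    (hW : ∀ y : Fin m → ℝ, y ∈ W ↔ ∑ i, y i • γ i = 0)
    (c : Fin m → ℝ) (hc : ∀ w ∈ W, ∑ i, c i * w i = 0) :
    ∃ v : V, ∀ i, γ i v = c i := by
  classical
  let Γ : (Fin m → ℝ) →ₗ[ℝ] Module.Dual ℝ V :=
    { toFun := fun y => ∑ i, y i • (γ i : V →ₗ[ℝ] ℝ)
      map_add' := by
        intro y z
        simp [add_smul, Finset.sum_add_distrib]
      map_smul' := by
        intro r y
        simp [smul_smul, Finset.smul_sum] }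
  have hker : LinearMap.ker Γ = W := by
    ext y
    have : (∑ i, y i • γ i : V →L[ℝ] ℝ) = 0 ↔ Γ y = 0 := by
      constructor
      · intro h
        ext v
        have := congrArg (fun f : V →L[ℝ] ℝ => f v) h
        simpa [Γ, ContinuousLinearMap.sum_apply] using this
      · intro h
        ext v
        have := congrArg (fun f : Module.Dual ℝ V => f v) h
        simpa [Γ, LinearMap.sum_apply] using this
    simp only [LinearMap.mem_ker, hW, this]
  let φ : Module.Dual ℝ (Fin m → ℝ) := ∑ i, c i • LinearMap.proj i
  have hφ : φ ∈ (LinearMap.ker Γ).dualAnnihilator := by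
    rw [Submodule.mem_dualAnnihilator]
    intro w hw
    rw [hker] at hw
    simpa [φ, mul_comm] using hc w hw
  rw [← LinearMap.range_dualMap_eq_dualAnnihilator_ker] at hφ
  obtain ⟨ψ, hψ⟩ := hφ
  refine ⟨(Module.evalEquiv ℝ V).symm ψ, fun i => ?_⟩
  have h1 : φ (Pi.single i 1) = c i := by
    simp [φ, Finset.sum_eq_single i, Pi.single_apply]
  have h2 := congrArg (fun f : Module.Dual ℝ (Fin m → ℝ) => f (Pi.single i 1)) hψ
  simp only [LinearMap.dualMap_apply, h1] at h2
  have h3 : Γ (Pi.single i 1) = (γ i : V →ₗ[ℝ] ℝ) := by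
    ext v
    simp [Γ, Finset.sum_eq_single i, Pi.single_apply]
  rw [h3] at h2
  have h4 := Module.apply_evalEquiv_symm_apply (R := ℝ) (M := V) (γ i : V →ₗ[ℝ] ℝ) ψ
  exact h4.trans h2

lemma gamma_eq_zero_imp {V : Type*} [NormedAddCommGroup V] [NormedSpace ℝ V]
    [FiniteDimensional ℝ V] {m : ℕ} (γ : Fin m → (V →L[ℝ] ℝ))
    (hspan : Submodule.span ℝ (Set.range γ) = ⊤)
    (v : V) (h : ∀ i, γ i v = 0) : v = 0 := by
  by_contra hv
  obtain ⟨f, hf⟩ := SeparatingDual.exists_ne_zero (R := ℝ) hv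
  have hmem : f ∈ Submodule.span ℝ (Set.range γ) := hspan ▸ Submodule.mem_top
  have hzero : f v = 0 := by
    clear hf
    induction hmem using Submodule.span_induction with
    | mem g hg => obtain ⟨i, rfl⟩ := hg; exact h i
    | zero => simp
    | add g₁ g₂ _ _ h1 h2 => simp [h1, h2]
    | smul r g _ hg => simp [hg]
  exact hf hzero

/-- The exponential action of `V` restricted to `U(K)` is free
iff for every `I ∈ K` the family `(a i)_{i ∈ I}` is linearly independent in `W*`. -/
theorem stmt5 {V : Type*} [NormedAddCommGroup V] [NormedSpace ℝ V]
    [FiniteDimensional ℝ V] {m : ℕ} (γ : Fin m → (V →L[ℝ] ℝ))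
    (hspan : Submodule.span ℝ (Set.range γ) = ⊤)
    (W : Submodule ℝ (Fin m → ℝ))
    (hW : ∀ y : Fin m → ℝ, y ∈ W ↔ ∑ i, y i • γ i = 0)
    (a : Fin m → (W →L[ℝ] ℝ))
    (ha : ∀ (i : Fin m) (w : W), a i w = (w : Fin m → ℝ) i)
    (K : Set (Set (Fin m))) (hKempty : ∅ ∈ K)
    (hKdown : ∀ I ∈ K, ∀ J ⊆ I, J ∈ K) :
    (∀ (v : V) (x : Fin m → ℝ), {i | x i = 0} ∈ K →
        (fun i => Real.exp (γ i v) * x i) = x → v = 0) ↔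
      ∀ I ∈ K, LinearIndependent ℝ (fun i : I => a i.1) := by
  classical
  constructor
  · intro hfree I hI
    refine (linearIndepOn_iff (R := ℝ) (s := I) (v := a)).mpr ?_
    intro l hl hl0
    -- l is supported on I and gives a vanishing combination of the a i
    have hlI : ∀ j, j ∉ I → l j = 0 := (Finsupp.mem_supported' ℝ l).mp hl
    have hcW : ∀ w ∈ W, ∑ j, (l j) * w j = 0 := by
      intro w hw
      have e0 : (Finsupp.linearCombination ℝ a) l ⟨w, hw⟩ = 0 := by rw [hl0]; rfl
      rw [Finsupp.linearCombination_apply, Finsupp.sum_fintype _ _ (by simp)] at e0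
      rw [ContinuousLinearMap.sum_apply] at e0
      simpa [ha] using e0
    obtain ⟨v, hv⟩ := key γ W hW l hcW
    have hv0 : v = 0 := by
      refine hfree v (fun j => if j ∈ I then 0 else 1) ?_ ?_
      · have : {i | (if i ∈ I then (0:ℝ) else 1) = 0} = I := by
          ext j; by_cases hj : j ∈ I <;> simp [hj]
        rw [this]; exact hI
      · funext j
        by_cases hj : j ∈ I
        · simp [hj]
        · have : γ j v = 0 := by rw [hv j, hlI j hj]
          simp [hj, this]
    ext j
    rw [← hv j, hv0]
    simp
  · intro hind v x hxK hfix
    have hout : ∀ j, j ∉ {i | x i = 0} → γ j v = 0 := by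
      intro j hj
      have hxj : x j ≠ 0 := hj
      have hfj : Real.exp (γ j v) * x j = x j := congrFun hfix j
      have hexp : Real.exp (γ j v) = 1 :=
        mul_right_cancel₀ hxj (by rw [one_mul]; exact hfj)
      exact Real.exp_eq_exp.mp (by rw [hexp, Real.exp_zero])
    have hzero : ∀ j, γ j v = 0 := by
      have hli := hind {i | x i = 0} hxK
      replace hli := (linearIndepOn_iff (R := ℝ) (s := {i | x i = 0}) (v := a)).mp hli
      set l : Fin m →₀ ℝ := Finsupp.equivFunOnFinite.symm (fun j => γ j v) with hldef
      have hlapp : ∀ j, l j = γ j v := fun j => rfl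
      have hlI : l ∈ Finsupp.supported ℝ ℝ {i | x i = 0} := by
        rw [Finsupp.mem_supported']
        intro j hj
        rw [hlapp j]
        exact hout j hj
      have hl0 : (Finsupp.linearCombination ℝ a) l = 0 := by
        ext w
        rw [Finsupp.linearCombination_apply, Finsupp.sum_fintype _ _ (by simp)]
        rw [ContinuousLinearMap.sum_apply]
        simp only [ContinuousLinearMap.smul_apply, ha, smul_eq_mul,
          ContinuousLinearMap.zero_apply, hlapp]
        have hw := (hW w).mp w.2
        have h2 := congrArg (fun f : V →L[ℝ] ℝ => f v) hw
        simp only [ContinuousLinearMap.sum_apply, ContinuousLinearMap.smul_apply,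
          smul_eq_mul, ContinuousLinearMap.zero_apply] at h2
        rw [← h2]
        exact Finset.sum_congr rfl fun j _ => mul_comm _ _
      have := hli l hlI hl0
      intro j
      rw [← hlapp j, this]
      rfl
    exact gamma_eq_zero_imp γ hspan v hzero
end

section
/- Let K be a simplicial complex on {1,…,m}. Assume the fan condition (for any two distinct I, J ∈ K, relint(cone{a_i : i ∈ I}) ∩ relint(cone{a_j : j ∈ J}) = ∅) and completeness (⋃_{I ∈ K} cone{a_i : i ∈ I} = W*). Define R_K = {x ∈ ℝ^m : there exists I ∈ K with |x_i| = 1 for all i ∉ I and |x_i| ≤ 1 for all i ∈ I}. Then R_K ⊆ U(K), every V-orbit of the exponential action on U(K) meets R_K in exactly one point, and the composite of the inclusion R_K ↪ U(K) with the quotient projection is a homeomorphism from R_K (with its subspace topology) onto the orbit space U(K)/V (with the quotient topology). -/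
set_option maxHeartbeats 1000000


/-- `U(K) = {x ∈ ℝ^m : {i : x i = 0} ∈ K}`, with the subspace topology. -/
abbrev UK {m : ℕ} (K : Set (Set (Fin m))) : Type _ :=
  {x : Fin m → ℝ // {i | x i = 0} ∈ K}

/-- Two points of `U(K)` are related iff they lie in the same orbit of the
exponential action `v • x = (e^{γ₁(v)} x₁, …, e^{γ_m(v)} x_m)` of `V`. -/
def orbitRel {V : Type*} [NormedAddCommGroup V] [NormedSpace ℝ V] {m : ℕ}
    (γ : Fin m → (V →L[ℝ] ℝ)) (K : Set (Set (Fin m))) : UK K → UK K → Prop :=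
  fun x y => ∃ v : V, (fun i => Real.exp (γ i v) * x.1 i) = y.1

/-- The real moment-angle manifold
`R_K = {x ∈ ℝ^m : ∃ I ∈ K, |x i| = 1 for i ∉ I and |x i| ≤ 1 for i ∈ I}`. -/
def RK {m : ℕ} (K : Set (Set (Fin m))) : Set (Fin m → ℝ) :=
  {x | ∃ I ∈ K, (∀ i ∉ I, |x i| = 1) ∧ ∀ i ∈ I, |x i| ≤ 1}

open Filter Topology

namespace S9

variable {E : Type*} [NormedAddCommGroup E] [NormedSpace ℝ E] {m : ℕ}

def posCone (a : Fin m → E) (I : Set (Fin m)) : Set E :=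
  {x | ∃ c : Fin m → ℝ, (∀ i ∉ I, c i = 0) ∧ (∀ i ∈ I, 0 < c i) ∧ x = ∑ i, c i • a i}

theorem posCone_subset (a : Fin m → E) (I : Set (Fin m)) :
    posCone a I ⊆ coneOf a I := by
  rintro x ⟨c, h0, hpos, rfl⟩
  refine ⟨c, fun i => ?_, h0, rfl⟩
  by_cases hi : i ∈ I
  · exact (hpos i hi).le
  · simp [h0 i hi]


theorem posCone_mem_intrinsicInterior (a : Fin m → E) (I : Set (Fin m)) :
    posCone a I ⊆ intrinsicInterior ℝ (coneOf a I) := by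
  classical
  rintro x hx
  obtain ⟨c, h0, hpos, hxc⟩ := hx
  set F : Submodule ℝ E := Submodule.span ℝ (a '' I) with hF
  have hcone_sub : coneOf a I ⊆ (F : Set E) := by
    rintro z ⟨e, he0, heI, rfl⟩
    refine Submodule.sum_mem _ fun i _ => ?_
    by_cases hi : i ∈ I
    · exact Submodule.smul_mem _ _ (Submodule.subset_span ⟨i, hi, rfl⟩)
    · simp [heI i hi]
  have hxcone : x ∈ coneOf a I := posCone_subset a I ⟨c, h0, hpos, hxc⟩
  have hxF : x ∈ F := hcone_sub hxcone
  let q0 : (Fin m → ℝ) →ₗ[ℝ] E :=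
    { toFun := fun d => ∑ i, (if i ∈ I then d i else 0) • a i
      map_add' := by
        intro d e
        rw [← Finset.sum_add_distrib]
        apply Finset.sum_congr rfl
        intro i _
        by_cases hi : i ∈ I <;> simp [hi, add_smul]
      map_smul' := by
        intro r d
        show (∑ i, (if i ∈ I then (r • d) i else 0) • a i)
            = (RingHom.id ℝ) r • ∑ i, (if i ∈ I then d i else 0) • a i
        rw [RingHom.id_apply, Finset.smul_sum]
        apply Finset.sum_congr rfl
        intro i _
        by_cases hi : i ∈ I <;> simp [hi, smul_smul] }
  have hq0apply : ∀ d, q0 d = ∑ i, (if i ∈ I then d i else 0) • a i := fun _ => rfl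
  have hq0mem : ∀ d, q0 d ∈ F := by
    intro d
    rw [hq0apply]
    refine Submodule.sum_mem _ fun i _ => ?_
    by_cases hi : i ∈ I
    · exact Submodule.smul_mem _ _ (Submodule.subset_span ⟨i, hi, rfl⟩)
    · simp [hi]
  have hq0i : ∀ i ∈ I, q0 (Pi.single i 1) = a i := by
    intro i hi
    rw [hq0apply, Finset.sum_eq_single i]
    · simp [hi]
    · intro j _ hj
      rw [Pi.single_eq_of_ne hj]
      simp
    · simp
  have hFle : F ≤ LinearMap.range q0 := by
    rw [hF, Submodule.span_le]
    rintro _ ⟨i, hi, rfl⟩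
    exact ⟨Pi.single i 1, hq0i i hi⟩
  let qF : (Fin m → ℝ) →ₗ[ℝ] F := q0.codRestrict F hq0mem
  have hsurj : LinearMap.range qF = ⊤ := by
    rw [LinearMap.range_eq_top]
    intro y
    obtain ⟨d, hd⟩ := hFle y.2
    exact ⟨d, Subtype.ext hd⟩
  haveI : FiniteDimensional ℝ F :=
    FiniteDimensional.span_of_finite ℝ ((Set.toFinite I).image a)
  obtain ⟨g, hg⟩ := qF.exists_rightInverse_of_surjective hsurj
  have hgq : ∀ z : F, q0 (g z) = (z : E) := by
    intro z
    have := LinearMap.congr_fun hg z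
    simpa [qF, LinearMap.codRestrict] using congrArg Subtype.val this
  obtain ⟨C, hC0, hC⟩ : ∃ C, 0 < C ∧ ∀ z : F, ‖g z‖ ≤ C * ‖z‖ := by
    let g' := LinearMap.toContinuousLinearMap g
    refine ⟨‖g'‖ + 1, by positivity, fun z => ?_⟩
    have h1 : ‖g' z‖ ≤ ‖g'‖ * ‖z‖ := g'.le_opNorm z
    have h2 : g' z = g z := rfl
    have h3 : ‖g z‖ ≤ ‖g'‖ * ‖z‖ := by rw [← h2]; exact h1
    nlinarith [norm_nonneg z]
  obtain ⟨δ, hδ0, hδle⟩ : ∃ δ > (0:ℝ), ∀ i ∈ I, δ ≤ c i := by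
    rcases ((Set.toFinite I).toFinset).eq_empty_or_nonempty with h | h
    · refine ⟨1, one_pos, fun i hi => ?_⟩
      exfalso
      have hmem : i ∈ (Set.toFinite I).toFinset := (Set.Finite.mem_toFinset _).2 hi
      rw [h] at hmem
      simp at hmem
    · refine ⟨((Set.toFinite I).toFinset).inf' h c, ?_, fun i hi => Finset.inf'_le c ((Set.Finite.mem_toFinset _).2 hi)⟩
      rw [gt_iff_lt, Finset.lt_inf'_iff]
      intro i hi
      exact hpos i ((Set.Finite.mem_toFinset _).1 hi)
  have haff : (affineSpan ℝ (coneOf a I) : Set E) ⊆ (F : Set E) := by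
    intro z hz
    have h1 : affineSpan ℝ (coneOf a I) ≤ F.toAffineSubspace := by
      rw [affineSpan_le]
      intro w hw
      rw [AffineSubspace.mem_coe, Submodule.mem_toAffineSubspace]
      exact hcone_sub hw
    have h2 : z ∈ F.toAffineSubspace := h1 hz
    rwa [Submodule.mem_toAffineSubspace] at h2
  rw [mem_intrinsicInterior]
  refine ⟨⟨x, subset_affineSpan ℝ _ hxcone⟩, ?_, rfl⟩
  rw [mem_interior_iff_mem_nhds, Metric.mem_nhds_iff]
  refine ⟨δ / C, by positivity, ?_⟩
  rintro ⟨z, hz⟩ hzball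
  rw [Metric.mem_ball, Subtype.dist_eq, dist_eq_norm] at hzball
  have hzF : z ∈ F := haff hz
  set w : F := ⟨z - x, sub_mem hzF hxF⟩ with hw
  set d : Fin m → ℝ := g w with hd
  have hdnorm : ∀ i, |d i| < δ := by
    intro i
    have h1 : ‖d i‖ ≤ ‖d‖ := norm_le_pi_norm d i
    have h2 : ‖d‖ ≤ C * ‖w‖ := hC w
    have h3 : ‖(w : E)‖ < δ / C := hzball
    have h4 : ‖w‖ = ‖(w : E)‖ := rfl
    rw [Real.norm_eq_abs] at h1
    calc |d i| ≤ C * ‖w‖ := h1.trans h2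
      _ < C * (δ / C) := by rw [h4]; exact (mul_lt_mul_iff_right₀ hC0).2 h3
      _ = δ := by field_simp
  have hqd : q0 d = z - x := hgq w
  show z ∈ coneOf a I
  refine ⟨fun i => c i + (if i ∈ I then d i else 0), ?_, ?_, ?_⟩
  · intro i
    by_cases hi : i ∈ I
    · have := hδle i hi
      have := (abs_lt.1 (hdnorm i)).1
      simp only [hi, if_true]
      linarith
    · simp [hi, h0 i hi]
  · intro i hi
    simp [hi, h0 i hi]
  · have hsplit : ∑ i, (c i + if i ∈ I then d i else 0) • a i
        = (∑ i, c i • a i) + ∑ i, (if i ∈ I then d i else 0) • a i := by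
      rw [← Finset.sum_add_distrib]
      apply Finset.sum_congr rfl
      intro i _
      rw [add_smul]
    rw [hsplit, ← hxc, ← hq0apply, hqd]
    abel


section core

variable {V : Type*} [NormedAddCommGroup V] [NormedSpace ℝ V] [FiniteDimensional ℝ V]
  {m : ℕ} {γ : Fin m → (V →L[ℝ] ℝ)} {W : Submodule ℝ (Fin m → ℝ)} {a : Fin m → (W →L[ℝ] ℝ)}
  {K : Set (Set (Fin m))}

theorem uniqT
    (hfan : ∀ I ∈ K, ∀ J ∈ K, I ≠ J →
      intrinsicInterior ℝ (coneOf a I) ∩ intrinsicInterior ℝ (coneOf a J) = ∅)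
    {T T' : Set (Fin m)} (hT : T ∈ K) (hT' : T' ∈ K)
    {ξ : W →L[ℝ] ℝ} (h1 : ξ ∈ posCone a T) (h2 : ξ ∈ posCone a T') : T = T' := by
  by_contra hne
  have h := hfan T hT T' hT' hne
  have : ξ ∈ intrinsicInterior ℝ (coneOf a T) ∩ intrinsicInterior ℝ (coneOf a T') :=
    ⟨posCone_mem_intrinsicInterior a T h1, posCone_mem_intrinsicInterior a T' h2⟩
  rw [h] at this
  exact this

theorem coeff_eq
    (hKdown : ∀ I ∈ K, ∀ J ⊆ I, J ∈ K)
    (hfan : ∀ I ∈ K, ∀ J ∈ K, I ≠ J →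
      intrinsicInterior ℝ (coneOf a I) ∩ intrinsicInterior ℝ (coneOf a J) = ∅)
    {S : Set (Fin m)} (hS : S ∈ K) {c c' : Fin m → ℝ}
    (hc : ∀ i ∉ S, c i = 0) (hc' : ∀ i ∉ S, c' i = 0)
    (h : ∑ i, c i • a i = ∑ i, c' i • a i) : c = c' := by
  set d : Fin m → ℝ := fun i => c i - c' i with hddef
  have scal : ∀ i, max (d i) 0 + c' i = max (-d i) 0 + c i := by
    intro i
    simp only [hddef]
    rcases le_total (c i) (c' i) with hle | hle
    · rw [max_eq_right (by linarith), max_eq_left (by linarith)]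
      ring
    · rw [max_eq_left (by linarith), max_eq_right (by linarith)]
      ring
  have key : ∑ i, max (d i) 0 • a i = ∑ i, max (-d i) 0 • a i := by
    ext w
    have hw : (∑ i, c i • a i) w = (∑ i, c' i • a i) w := by rw [h]
    simp only [ContinuousLinearMap.sum_apply, ContinuousLinearMap.smul_apply,
      smul_eq_mul] at hw ⊢
    calc ∑ i, max (d i) 0 * (a i) w
        = ∑ i, (max (-d i) 0 * (a i) w + (c i * (a i) w - c' i * (a i) w)) := by
          apply Finset.sum_congr rfl
          intro i _
          have hmi : max (d i) 0 = max (-d i) 0 + (c i - c' i) := by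
            have := scal i
            simp only [hddef] at this ⊢
            linarith
          rw [hmi]
          ring
      _ = (∑ i, max (-d i) 0 * (a i) w)
            + ((∑ i, c i * (a i) w) - ∑ i, c' i * (a i) w) := by
          rw [Finset.sum_add_distrib, Finset.sum_sub_distrib]
      _ = ∑ i, max (-d i) 0 * (a i) w := by
          rw [hw, sub_self, add_zero]
  have hTpK : {i | 0 < d i} ∈ K := by
    refine hKdown S hS _ (fun i hi => ?_)
    by_contra hiS
    have : d i = 0 := by simp [hddef, hc i hiS, hc' i hiS]
    rw [Set.mem_setOf_eq, this] at hi
    exact lt_irrefl 0 hi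
  have hTnK : {i | d i < 0} ∈ K := by
    refine hKdown S hS _ (fun i hi => ?_)
    by_contra hiS
    have : d i = 0 := by simp [hddef, hc i hiS, hc' i hiS]
    rw [Set.mem_setOf_eq, this] at hi
    exact lt_irrefl 0 hi
  have hp : (∑ i, max (d i) 0 • a i) ∈ posCone a {i | 0 < d i} := by
    refine ⟨fun i => max (d i) 0, fun i hi => ?_, fun i hi => ?_, rfl⟩
    · exact max_eq_right (le_of_not_gt hi)
    · exact lt_max_of_lt_left hi
  have hn : (∑ i, max (d i) 0 • a i) ∈ posCone a {i | d i < 0} := by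
    rw [key]
    refine ⟨fun i => max (-d i) 0, fun i hi => ?_, fun i hi => ?_, rfl⟩
    · refine max_eq_right ?_
      rw [Set.mem_setOf_eq, not_lt] at hi
      linarith
    · rw [Set.mem_setOf_eq] at hi
      refine lt_max_of_lt_left ?_
      linarith
  have hTeq := uniqT hfan hTpK hTnK hp hn
  funext i
  have hdz : d i = 0 := by
    rcases lt_trichotomy (d i) 0 with hlt | heq | hgt
    · have : i ∈ {i | 0 < d i} := hTeq ▸ hlt
      exact absurd this.out (by linarith)
    · exact heq
    · have : i ∈ {i | d i < 0} := hTeq ▸ hgt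
      exact absurd this.out (by linarith)
  have h2 : c i - c' i = 0 := hdz
  linarith

theorem cover (hKdown : ∀ I ∈ K, ∀ J ⊆ I, J ∈ K)
    (hcomplete : (⋃ I ∈ K, coneOf a I) = Set.univ)
    (ξ : W →L[ℝ] ℝ) : ∃ T ∈ K, ξ ∈ posCone a T := by
  have hξ : ξ ∈ ⋃ I ∈ K, coneOf a I := by rw [hcomplete]; trivial
  rw [Set.mem_iUnion₂] at hξ
  obtain ⟨I, hI, c, hc0, hcI, rfl⟩ := hξ
  refine ⟨{i | c i ≠ 0}, hKdown I hI _ (fun i hi => ?_), c, fun i hi => ?_, fun i hi => ?_, rfl⟩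
  · by_contra hiI
    exact hi.out (hcI i hiI)
  · rw [Set.mem_setOf_eq, not_not] at hi
    exact hi
  · exact lt_of_le_of_ne (hc0 i) (Ne.symm hi.out)

theorem sum_gamma_a (hW : ∀ y : Fin m → ℝ, y ∈ W ↔ ∑ i, y i • γ i = 0)
    (ha : ∀ (i : Fin m) (w : W), a i w = (w : Fin m → ℝ) i) (v : V) :
    ∑ i, (γ i v) • a i = 0 := by
  ext w
  have h1 : (∑ i, (w : Fin m → ℝ) i • γ i) = 0 := (hW w).1 w.2
  have h2 : (∑ i, (w : Fin m → ℝ) i • γ i) v = 0 := by rw [h1]; rfl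
  rw [ContinuousLinearMap.sum_apply] at h2
  simp only [ContinuousLinearMap.smul_apply, smul_eq_mul] at h2
  rw [ContinuousLinearMap.sum_apply, ContinuousLinearMap.zero_apply]
  simp only [ContinuousLinearMap.smul_apply, smul_eq_mul]
  rw [← h2]
  apply Finset.sum_congr rfl
  intro i _
  rw [ha i w, mul_comm]

theorem gamma_sep (hspan : Submodule.span ℝ (Set.range γ) = ⊤)
    {v : V} (hv : ∀ i, γ i v = 0) : v = 0 := by
  have hall : ∀ g ∈ Submodule.span ℝ (Set.range γ), g v = 0 := by
    intro g hgmem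
    induction hgmem using Submodule.span_induction with
    | mem g hg => obtain ⟨i, rfl⟩ := hg; exact hv i
    | zero => rfl
    | add g h _ _ hg hh => rw [ContinuousLinearMap.add_apply, hg, hh, add_zero]
    | smul r g _ hg => rw [ContinuousLinearMap.smul_apply, hg, smul_zero]
  by_contra hne
  obtain ⟨f, hf⟩ := SeparatingDual.exists_ne_zero (R := ℝ) hne
  exact hf (hall f (by rw [hspan]; trivial))

theorem exists_v [FiniteDimensional ℝ V]
    (hspan : Submodule.span ℝ (Set.range γ) = ⊤)
    (hW : ∀ y : Fin m → ℝ, y ∈ W ↔ ∑ i, y i • γ i = 0)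
    (ha : ∀ (i : Fin m) (w : W), a i w = (w : Fin m → ℝ) i)
    (s : Fin m → ℝ) (hs : ∑ i, s i • a i = 0) : ∃ v : V, ∀ i, γ i v = s i := by
  classical
  let Φ : V →ₗ[ℝ] (Fin m → ℝ) :=
    { toFun := fun v i => γ i v
      map_add' := by intro u v; funext i; simp
      map_smul' := by intro r v; funext i; simp }
  let ρ : (Fin m → ℝ) →ₗ[ℝ] Module.Dual ℝ W :=
    { toFun := fun t => ∑ i, t i • ((a i : W →ₗ[ℝ] ℝ))
      map_add' := by
        intro t u
        show (∑ i, ((t + u) i) • ((a i : W →ₗ[ℝ] ℝ))) = _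
        rw [← Finset.sum_add_distrib]
        apply Finset.sum_congr rfl
        intro i _
        rw [Pi.add_apply, add_smul]
      map_smul' := by
        intro r t
        show (∑ i, ((r • t) i) • ((a i : W →ₗ[ℝ] ℝ))) = _
        rw [RingHom.id_apply, Finset.smul_sum]
        apply Finset.sum_congr rfl
        intro i _
        rw [Pi.smul_apply, smul_smul, smul_eq_mul] }
  let Γ : (Fin m → ℝ) →ₗ[ℝ] Module.Dual ℝ V :=
    { toFun := fun t => ∑ i, t i • ((γ i : V →ₗ[ℝ] ℝ))
      map_add' := by
        intro t u
        show (∑ i, ((t + u) i) • ((γ i : V →ₗ[ℝ] ℝ))) = _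
        rw [← Finset.sum_add_distrib]
        apply Finset.sum_congr rfl
        intro i _
        rw [Pi.add_apply, add_smul]
      map_smul' := by
        intro r t
        show (∑ i, ((r • t) i) • ((γ i : V →ₗ[ℝ] ℝ))) = _
        rw [RingHom.id_apply, Finset.smul_sum]
        apply Finset.sum_congr rfl
        intro i _
        rw [Pi.smul_apply, smul_smul, smul_eq_mul] }
  have hΦ : ∀ v i, Φ v i = γ i v := fun _ _ => rfl
  have hρ : ∀ t, ρ t = ∑ i, t i • ((a i : W →ₗ[ℝ] ℝ)) := fun _ => rfl
  have hΓ : ∀ t, Γ t = ∑ i, t i • ((γ i : V →ₗ[ℝ] ℝ)) := fun _ => rfl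
  -- bridges between CLM sums and LM sums
  have bridge_a : ∀ t : Fin m → ℝ,
      (((∑ i, t i • a i : W →L[ℝ] ℝ)) : W →ₗ[ℝ] ℝ) = ∑ i, t i • ((a i : W →ₗ[ℝ] ℝ)) := by
    intro t
    rw [ContinuousLinearMap.coe_sum]
    apply Finset.sum_congr rfl
    intro i _
    rw [ContinuousLinearMap.coe_smul]
  have bridge_γ : ∀ t : Fin m → ℝ,
      (((∑ i, t i • γ i : V →L[ℝ] ℝ)) : V →ₗ[ℝ] ℝ) = ∑ i, t i • ((γ i : V →ₗ[ℝ] ℝ)) := by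
    intro t
    rw [ContinuousLinearMap.coe_sum]
    apply Finset.sum_congr rfl
    intro i _
    rw [ContinuousLinearMap.coe_smul]
  have hrange_le : LinearMap.range Φ ≤ LinearMap.ker ρ := by
    rintro _ ⟨v, rfl⟩
    rw [LinearMap.mem_ker, hρ]
    have hb : ∑ i, (Φ v) i • ((a i : W →ₗ[ℝ] ℝ)) = ∑ i, (γ i v) • ((a i : W →ₗ[ℝ] ℝ)) :=
      Finset.sum_congr rfl (fun i _ => by rw [hΦ])
    rw [hb, ← bridge_a (fun i => γ i v), sum_gamma_a hW ha v]
    rfl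
  have hkerΦ : LinearMap.ker Φ = ⊥ := by
    rw [LinearMap.ker_eq_bot']
    intro v hv
    exact gamma_sep hspan (fun i => congrFun hv i)
  have hkerΓ : LinearMap.ker Γ = W := by
    ext t
    rw [LinearMap.mem_ker, hΓ, ← bridge_γ t, hW t]
    constructor
    · intro h
      exact ContinuousLinearMap.coe_injective (by rw [h]; rfl)
    · intro h
      rw [h]
      rfl
  have hrangeΓ : LinearMap.range Γ = ⊤ := by
    rw [eq_top_iff]
    intro f _
    have hf : (LinearMap.toContinuousLinearMap f) ∈ Submodule.span ℝ (Set.range γ) := by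
      rw [hspan]; trivial
    -- span induction to write any functional as a combination
    have hallmem : ∀ g : V →L[ℝ] ℝ, g ∈ Submodule.span ℝ (Set.range γ) →
        ((g : V →ₗ[ℝ] ℝ) ∈ LinearMap.range Γ) := by
      intro g hg
      induction hg using Submodule.span_induction with
      | mem g hgm =>
          obtain ⟨i, rfl⟩ := hgm
          refine ⟨Pi.single i 1, ?_⟩
          rw [hΓ, Finset.sum_eq_single i]
          · simp
          · intro j _ hj
            rw [Pi.single_eq_of_ne hj]
            simp
          · simp
      | zero => exact ⟨0, by rw [map_zero]; rfl⟩
      | add g h _ _ hg hh =>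
          obtain ⟨t1, ht1⟩ := hg
          obtain ⟨t2, ht2⟩ := hh
          exact ⟨t1 + t2, by rw [map_add, ht1, ht2]; rfl⟩
      | smul r g _ hg =>
          obtain ⟨t1, ht1⟩ := hg
          exact ⟨r • t1, by rw [map_smul, ht1]; rfl⟩
    have := hallmem (LinearMap.toContinuousLinearMap f) hf
    have hcoe : ((LinearMap.toContinuousLinearMap f : V →L[ℝ] ℝ) : V →ₗ[ℝ] ℝ) = f := by
      ext v
      rfl
    rwa [hcoe] at this
  have hrangeρ : LinearMap.range ρ = ⊤ := by
    rw [eq_top_iff]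
    rintro f -
    obtain ⟨C, hC⟩ := Submodule.exists_isCompl W
    refine ⟨fun i => (f.comp (Submodule.projectionOnto W C hC)) (fun j => if i = j then 1 else 0), ?_⟩
    set G : (Fin m → ℝ) →ₗ[ℝ] ℝ := f.comp (Submodule.projectionOnto W C hC) with hG
    ext w
    rw [hρ, LinearMap.sum_apply]
    have h1 : G (w : Fin m → ℝ) = f w := by
      rw [hG, LinearMap.comp_apply, Submodule.projectionOnto_apply_left]
    rw [← h1, LinearMap.pi_apply_eq_sum_univ G (w : Fin m → ℝ)]
    apply Finset.sum_congr rfl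
    intro i _
    rw [LinearMap.smul_apply]
    have h2 : ((a i : W →ₗ[ℝ] ℝ)) w = (w : Fin m → ℝ) i := ha i w
    rw [h2, smul_eq_mul, smul_eq_mul, mul_comm]
  have e1 : Module.finrank ℝ (Module.Dual ℝ V) = Module.finrank ℝ V :=
    Subspace.dual_finrank_eq
  have e2 : Module.finrank ℝ (Module.Dual ℝ W) = Module.finrank ℝ W :=
    Subspace.dual_finrank_eq
  have hΓrank := LinearMap.finrank_range_add_finrank_ker Γ
  rw [hkerΓ, hrangeΓ, finrank_top, e1, Module.finrank_fintype_fun_eq_card,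
    Fintype.card_fin] at hΓrank
  have hρrank := LinearMap.finrank_range_add_finrank_ker ρ
  rw [hrangeρ, finrank_top, e2, Module.finrank_fintype_fun_eq_card,
    Fintype.card_fin] at hρrank
  have hΦrank := LinearMap.finrank_range_add_finrank_ker Φ
  rw [hkerΦ, finrank_bot, add_zero] at hΦrank
  have heq : LinearMap.range Φ = LinearMap.ker ρ := by
    apply Submodule.eq_of_le_of_finrank_le hrange_le
    omega
  have hsker : s ∈ LinearMap.ker ρ := by
    rw [LinearMap.mem_ker, hρ, ← bridge_a s, hs]
    rfl
  rw [← heq] at hsker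
  obtain ⟨v, hv⟩ := hsker
  exact ⟨v, fun i => by rw [← congrFun hv i]; rfl⟩

end core

section main

variable {V : Type*} [NormedAddCommGroup V] [NormedSpace ℝ V] [FiniteDimensional ℝ V]
  {m : ℕ} {γ : Fin m → (V →L[ℝ] ℝ)} {W : Submodule ℝ (Fin m → ℝ)} {a : Fin m → (W →L[ℝ] ℝ)}
  {K : Set (Set (Fin m))}

theorem stepA (hKdown : ∀ I ∈ K, ∀ J ⊆ I, J ∈ K) :
    RK K ⊆ {x : Fin m → ℝ | {i | x i = 0} ∈ K} := by
  rintro x ⟨I, hI, hIeq, hIle⟩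
  refine hKdown I hI _ (fun i hi => ?_)
  by_contra hiI
  have h := hIeq i hiI
  rw [hi.out, abs_zero] at h
  norm_num at h

theorem exists_rep
    (hspan : Submodule.span ℝ (Set.range γ) = ⊤)
    (hW : ∀ y : Fin m → ℝ, y ∈ W ↔ ∑ i, y i • γ i = 0)
    (ha : ∀ (i : Fin m) (w : W), a i w = (w : Fin m → ℝ) i)
    (hKdown : ∀ I ∈ K, ∀ J ⊆ I, J ∈ K)
    (hfan : ∀ I ∈ K, ∀ J ∈ K, I ≠ J →
      intrinsicInterior ℝ (coneOf a I) ∩ intrinsicInterior ℝ (coneOf a J) = ∅)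
    (hcomplete : (⋃ I ∈ K, coneOf a I) = Set.univ)
    (x : Fin m → ℝ) (hx : {i | x i = 0} ∈ K) :
    ∃ y, y ∈ RK K ∧ ∃ v : V, (fun i => Real.exp (γ i v) * x i) = y := by
  classical
  set t' : ℕ → Fin m → ℝ := fun M i => if x i = 0 then (M : ℝ) else -Real.log |x i|
    with ht'
  set ind : Fin m → ℝ := fun i => if x i = 0 then (1:ℝ) else 0 with hind
  set ξ : ℕ → (W →L[ℝ] ℝ) := fun M => ∑ i, t' M i • a i with hξ
  set η : (W →L[ℝ] ℝ) := ∑ i, ind i • a i with hη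
  have hcov := fun M : ℕ => cover (a := a) hKdown hcomplete (ξ M)
  choose T hTK hmem using hcov
  choose cc h1 h2 h3 using hmem
  have hccnn : ∀ M i, 0 ≤ cc M i := by
    intro M i
    by_cases hi : i ∈ T M
    · exact (h2 M i hi).le
    · exact (h1 M i hi).ge
  obtain ⟨T₀, hT₀⟩ : ∃ T₀ : Set (Fin m), (T ⁻¹' {T₀}).Infinite := by
    obtain ⟨T₀, h⟩ := Finite.exists_infinite_fiber T
    exact ⟨T₀, Set.infinite_coe_iff.mp h⟩
  obtain ⟨M1, hM1⟩ := hT₀.nonempty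
  have hM1T : T M1 = T₀ := hM1
  have hT₀K : T₀ ∈ K := hM1T ▸ hTK M1
  obtain ⟨M2, hM2S, hM2gt⟩ := hT₀.exists_gt M1
  have hM2T : T M2 = T₀ := hM2S
  set d : Fin m → ℝ := fun i => ((M2 : ℝ) - (M1 : ℝ))⁻¹ * (cc M2 i - cc M1 i) with hd
  have hMpos : (0:ℝ) < (M2 : ℝ) - (M1 : ℝ) := by
    have h : (M1 : ℝ) < (M2 : ℝ) := by exact_mod_cast hM2gt
    linarith
  have hdsupp : ∀ i ∉ T₀, d i = 0 := by
    intro i hi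
    rw [hd]
    simp only []
    rw [h1 M2 i (hM2T ▸ hi), h1 M1 i (hM1T ▸ hi)]
    simp
  have ht'id : ∀ (M M' : ℕ) (i : Fin m),
      t' M i = t' M' i + ((M : ℝ) - (M' : ℝ)) * ind i := by
    intro M M' i
    by_cases hxi : x i = 0 <;> simp [ht', hind, hxi] <;> ring
  have hξeval : ∀ (M : ℕ) (w : W), ξ M w = ∑ i, t' M i * (a i) w := by
    intro M w
    rw [hξ]
    simp only []
    rw [ContinuousLinearMap.sum_apply]
    exact Finset.sum_congr rfl (fun i _ => by
      simp)
  have hcceval : ∀ (M : ℕ) (w : W), ξ M w = ∑ i, cc M i * (a i) w := by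
    intro M w
    rw [h3 M, ContinuousLinearMap.sum_apply]
    exact Finset.sum_congr rfl (fun i _ => by
      simp)
  have hηeval : ∀ w : W, η w = ∑ i, ind i * (a i) w := by
    intro w
    rw [hη, ContinuousLinearMap.sum_apply]
    exact Finset.sum_congr rfl (fun i _ => by
      simp)
  have hηd : η = ∑ i, d i • a i := by
    ext w
    rw [hηeval w, ContinuousLinearMap.sum_apply]
    have e1 : ∑ i, (d i • a i) w = ∑ i, d i * (a i) w :=
      Finset.sum_congr rfl (fun i _ => by
        simp)
    rw [e1]
    have e2 : ∑ i, d i * (a i) w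
        = ((M2 : ℝ) - (M1 : ℝ))⁻¹ * ∑ i, (cc M2 i - cc M1 i) * (a i) w := by
      rw [Finset.mul_sum]
      exact Finset.sum_congr rfl (fun i _ => by rw [hd]; ring)
    have e3 : ∑ i, (cc M2 i - cc M1 i) * (a i) w
        = (∑ i, cc M2 i * (a i) w) - ∑ i, cc M1 i * (a i) w := by
      rw [← Finset.sum_sub_distrib]
      exact Finset.sum_congr rfl (fun i _ => by ring)
    have e4 : (∑ i, cc M2 i * (a i) w) - ∑ i, cc M1 i * (a i) w
        = ((M2 : ℝ) - (M1 : ℝ)) * ∑ i, ind i * (a i) w := by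
      rw [← hcceval M2 w, ← hcceval M1 w, hξeval M2 w, hξeval M1 w, Finset.mul_sum,
        ← Finset.sum_sub_distrib]
      exact Finset.sum_congr rfl (fun i _ => by rw [ht'id M2 M1 i]; ring)
    rw [e2, e3, e4, ← mul_assoc, inv_mul_cancel₀ (ne_of_gt hMpos), one_mul]
  have hrel : ∀ M3 ∈ T ⁻¹' {T₀}, cc M3 = fun j => cc M1 j + ((M3 : ℝ) - (M1 : ℝ)) * d j := by
    intro M3 hM3S
    have hM3T : T M3 = T₀ := hM3S
    refine coeff_eq hKdown hfan hT₀K (fun i hi => h1 M3 i (by rw [hM3T]; exact hi)) ?_ ?_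
    · intro i hi
      rw [h1 M1 i (hM1T ▸ hi), hdsupp i hi]
      ring
    · ext w
      rw [← h3 M3]
      have e1 : (∑ i, (cc M1 i + ((M3 : ℝ) - (M1 : ℝ)) * d i) • a i) w
          = ∑ i, (cc M1 i + ((M3 : ℝ) - (M1 : ℝ)) * d i) * (a i) w := by
        rw [ContinuousLinearMap.sum_apply]
        exact Finset.sum_congr rfl (fun i _ => by
          simp)
      rw [e1, hξeval M3 w]
      have hdev : ∀ w : W, (∑ i, d i • a i) w = ∑ i, d i * (a i) w := by
        intro w
        rw [ContinuousLinearMap.sum_apply]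
        exact Finset.sum_congr rfl (fun i _ => by
          simp)
      have hηw : ∑ i, ind i * (a i) w = ∑ i, d i * (a i) w := by
        rw [← hηeval w, hηd, hdev w]
      calc ∑ i, t' M3 i * (a i) w
          = ∑ i, (t' M1 i * (a i) w + ((M3 : ℝ) - (M1 : ℝ)) * (ind i * (a i) w)) := by
            exact Finset.sum_congr rfl (fun i _ => by rw [ht'id M3 M1 i]; ring)
        _ = (∑ i, t' M1 i * (a i) w)
              + ((M3 : ℝ) - (M1 : ℝ)) * ∑ i, ind i * (a i) w := by
            rw [Finset.sum_add_distrib, Finset.mul_sum]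
        _ = (∑ i, cc M1 i * (a i) w)
              + ((M3 : ℝ) - (M1 : ℝ)) * ∑ i, d i * (a i) w := by
            rw [← hξeval M1 w, hcceval M1 w, hηw]
        _ = ∑ i, (cc M1 i + ((M3 : ℝ) - (M1 : ℝ)) * d i) * (a i) w := by
            rw [Finset.mul_sum, ← Finset.sum_add_distrib]
            exact Finset.sum_congr rfl (fun i _ => by ring)
  have hdnn : ∀ i, 0 ≤ d i := by
    intro i
    by_contra hneg
    rw [not_le] at hneg
    obtain ⟨M3, hM3S, hM3gt⟩ := hT₀.exists_gt (M1 + Nat.ceil (cc M1 i / (-d i)))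
    have h := congrFun (hrel M3 hM3S) i
    have hnn := hccnn M3 i
    rw [h] at hnn
    have hcast : (M1 : ℝ) + Nat.ceil (cc M1 i / (-d i)) < (M3 : ℝ) := by
      have := hM3gt
      push_cast
      exact_mod_cast this
    have hceil : cc M1 i / (-d i) ≤ (Nat.ceil (cc M1 i / (-d i)) : ℝ) := Nat.le_ceil _
    have hgt : cc M1 i / (-d i) < (M3 : ℝ) - (M1 : ℝ) := by linarith
    have hprod : cc M1 i < ((M3 : ℝ) - (M1 : ℝ)) * (-d i) :=
      (div_lt_iff₀ (by linarith)).1 hgt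
    have hring : ((M3 : ℝ) - (M1 : ℝ)) * (-d i) = -(((M3 : ℝ) - (M1 : ℝ)) * d i) := by
      ring
    rw [hring] at hprod
    linarith
  have hZsub : {i | x i = 0} ⊆ T₀ := by
    have hη1 : η ∈ posCone a {i | x i = 0} := by
      refine ⟨ind, fun i hi => ?_, fun i hi => ?_, hη⟩
      · simp only [Set.mem_setOf_eq] at hi
        simp only [hind]
        rw [if_neg hi]
      · simp only [hind]
        rw [if_pos hi.out]
        norm_num
    have hdK : {i | d i ≠ 0} ∈ K := by
      refine hKdown T₀ hT₀K _ (fun i hi => ?_)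
      by_contra h
      exact hi.out (hdsupp i h)
    have hη2 : η ∈ posCone a {i | d i ≠ 0} := by
      refine ⟨d, fun i hi => ?_, fun i hi => ?_, hηd⟩
      · rw [Set.mem_setOf_eq, not_not] at hi
        exact hi
      · exact lt_of_le_of_ne (hdnn i) (Ne.symm hi.out)
    rw [uniqT hfan hx hdK hη1 hη2]
    intro i hi
    by_contra h
    exact hi.out (hdsupp i h)
  -- construct v
  set s : Fin m → ℝ := fun i => t' M1 i - cc M1 i with hs
  have hs0 : ∑ i, s i • a i = 0 := by
    ext w
    have e1 : (∑ i, s i • a i) w = ∑ i, s i * (a i) w := by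
      rw [ContinuousLinearMap.sum_apply]
      exact Finset.sum_congr rfl (fun i _ => by
        simp)
    rw [e1, ContinuousLinearMap.zero_apply]
    have e2 : ∑ i, s i * (a i) w
        = (∑ i, t' M1 i * (a i) w) - ∑ i, cc M1 i * (a i) w := by
      rw [← Finset.sum_sub_distrib]
      exact Finset.sum_congr rfl (fun i _ => by rw [hs]; ring)
    rw [e2, ← hξeval M1 w, ← hcceval M1 w, sub_self]
  obtain ⟨v, hv⟩ := exists_v hspan hW ha s hs0
  have habs : ∀ i, x i ≠ 0 →
      |Real.exp (γ i v) * x i| = Real.exp (-(cc M1 i)) := by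
    intro i hxi
    have h0 : 0 < |x i| := abs_pos.2 hxi
    rw [abs_mul, Real.abs_exp, hv i, hs]
    simp only [ht']
    rw [if_neg hxi]
    rw [show -Real.log |x i| - cc M1 i = -(cc M1 i) + -Real.log |x i| by ring]
    rw [Real.exp_add, Real.exp_neg (Real.log |x i|), Real.exp_log h0, mul_assoc,
      inv_mul_cancel₀ (ne_of_gt h0), mul_one]
  refine ⟨fun i => Real.exp (γ i v) * x i, ⟨T₀, hT₀K, ?_, ?_⟩, v, rfl⟩
  · intro i hi
    have hxi : x i ≠ 0 := fun h => hi (hZsub h)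
    show |Real.exp (γ i v) * x i| = 1
    rw [habs i hxi, h1 M1 i (by rw [hM1T]; exact hi), neg_zero, Real.exp_zero]
  · intro i hi
    show |Real.exp (γ i v) * x i| ≤ 1
    by_cases hxi : x i = 0
    · rw [hxi, mul_zero, abs_zero]
      norm_num
    · rw [habs i hxi]
      rw [Real.exp_le_one_iff]
      have := hccnn M1 i
      linarith

theorem uniq_rep
    (hW : ∀ y : Fin m → ℝ, y ∈ W ↔ ∑ i, y i • γ i = 0)
    (ha : ∀ (i : Fin m) (w : W), a i w = (w : Fin m → ℝ) i)
    (hKdown : ∀ I ∈ K, ∀ J ⊆ I, J ∈ K)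
    (hfan : ∀ I ∈ K, ∀ J ∈ K, I ≠ J →
      intrinsicInterior ℝ (coneOf a I) ∩ intrinsicInterior ℝ (coneOf a J) = ∅)
    {y y' : Fin m → ℝ} (hy : y ∈ RK K) (hy' : y' ∈ RK K)
    (v : V) (hvy : ∀ i, Real.exp (γ i v) * y i = y' i) : y = y' := by
  classical
  obtain ⟨I₀, hI₀, hIeq, hIle⟩ := hy
  obtain ⟨I₀', hI₀', hIeq', hIle'⟩ := hy'
  have hley : ∀ i, |y i| ≤ 1 := by
    intro i
    by_cases hi : i ∈ I₀
    · exact hIle i hi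
    · exact (hIeq i hi).le
  have hley' : ∀ i, |y' i| ≤ 1 := by
    intro i
    by_cases hi : i ∈ I₀'
    · exact hIle' i hi
    · exact (hIeq' i hi).le
  have hzero : ∀ i, y i = 0 ↔ y' i = 0 := by
    intro i
    rw [← hvy i, mul_eq_zero]
    have := Real.exp_ne_zero (γ i v)
    tauto
  set J : Set (Fin m) := {i | |y i| < 1} with hJ
  set J' : Set (Fin m) := {i | |y' i| < 1} with hJ'
  have hJK : J ∈ K := by
    refine hKdown I₀ hI₀ _ (fun i hi => ?_)
    by_contra h
    have := hIeq i h
    have h2 := hi.out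
    rw [this] at h2
    exact lt_irrefl 1 h2
  have hJ'K : J' ∈ K := by
    refine hKdown I₀' hI₀' _ (fun i hi => ?_)
    by_contra h
    have := hIeq' i h
    have h2 := hi.out
    rw [this] at h2
    exact lt_irrefl 1 h2
  set u : Fin m → ℝ := fun i => γ i v with hu
  set M : ℝ := 1 + ∑ i, |u i| with hM
  have hMu : ∀ i, |u i| < M := by
    intro i
    have h1 : |u i| ≤ ∑ j, |u j| :=
      Finset.single_le_sum (f := fun j => |u j|) (fun j _ => abs_nonneg _)
        (Finset.mem_univ i)
    rw [hM]
    linarith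
  have hM0 : 0 < M := by
    have h1 : (0:ℝ) ≤ ∑ i, |u i| := Finset.sum_nonneg (fun i _ => abs_nonneg _)
    rw [hM]
    linarith
  set lam : Fin m → ℝ := fun i => if y i = 0 then M else -Real.log |y i| with hlam
  set lam' : Fin m → ℝ := fun i => if y i = 0 then M - u i else -Real.log |y' i|
    with hlam'
  have hynz : ∀ i, i ∉ J → y i ≠ 0 := by
    intro i hi h0
    have h1 : |y i| < 1 := by rw [h0, abs_zero]; norm_num
    exact hi h1
  have hy'nz : ∀ i, i ∉ J' → y' i ≠ 0 := by
    intro i hi h0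
    have h1 : |y' i| < 1 := by rw [h0, abs_zero]; norm_num
    exact hi h1
  have habs1 : ∀ i, i ∉ J → |y i| = 1 := by
    intro i hi
    have h1 : ¬ |y i| < 1 := hi
    have := hley i
    linarith [not_lt.1 h1]
  have habs1' : ∀ i, i ∉ J' → |y' i| = 1 := by
    intro i hi
    have h1 : ¬ |y' i| < 1 := hi
    have := hley' i
    linarith [not_lt.1 h1]
  have hlam_supp : ∀ i ∉ J, lam i = 0 := by
    intro i hi
    rw [hlam]
    simp only []
    rw [if_neg (hynz i hi), habs1 i hi, Real.log_one, neg_zero]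
  have hlam_pos : ∀ i ∈ J, 0 < lam i := by
    intro i hi
    rw [hlam]
    simp only []
    by_cases h0 : y i = 0
    · rw [if_pos h0]
      exact hM0
    · rw [if_neg h0]
      have h1 : 0 < |y i| := abs_pos.2 h0
      have h2 : |y i| < 1 := hi.out
      have := Real.log_neg h1 h2
      linarith
  have hlam'_supp : ∀ i ∉ J', lam' i = 0 := by
    intro i hi
    have h0' : y' i ≠ 0 := hy'nz i hi
    have h0 : y i ≠ 0 := fun h => h0' ((hzero i).1 h)
    rw [hlam']
    simp only []
    rw [if_neg h0, habs1' i hi, Real.log_one, neg_zero]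
  have hlam'_pos : ∀ i ∈ J', 0 < lam' i := by
    intro i hi
    rw [hlam']
    simp only []
    by_cases h0 : y i = 0
    · rw [if_pos h0]
      have := hMu i
      have := abs_lt.1 (hMu i)
      linarith [this.2]
    · rw [if_neg h0]
      have h0' : y' i ≠ 0 := fun h => h0 ((hzero i).2 h)
      have h1 : 0 < |y' i| := abs_pos.2 h0'
      have h2 : |y' i| < 1 := hi.out
      have := Real.log_neg h1 h2
      linarith
  have habsrel : ∀ i, y i ≠ 0 → Real.log |y' i| = u i + Real.log |y i| := by
    intro i h0
    rw [← hvy i, abs_mul, Real.abs_exp,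
      Real.log_mul (Real.exp_ne_zero _) (abs_ne_zero.2 h0), Real.log_exp]
  have hdiff : ∀ i, lam i = lam' i + u i := by
    intro i
    by_cases h0 : y i = 0
    · rw [hlam, hlam']
      simp only []
      rw [if_pos h0, if_pos h0]
      ring
    · rw [hlam, hlam']
      simp only []
      rw [if_neg h0, if_neg h0, habsrel i h0]
      ring
  have hsum : ∑ i, lam i • a i = ∑ i, lam' i • a i := by
    ext w
    have hg : (∑ i, (γ i v) • a i) w = (0 : W →L[ℝ] ℝ) w := by
      rw [sum_gamma_a hW ha v]
    rw [ContinuousLinearMap.sum_apply, ContinuousLinearMap.zero_apply] at hg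
    simp only [ContinuousLinearMap.smul_apply, smul_eq_mul] at hg
    rw [ContinuousLinearMap.sum_apply, ContinuousLinearMap.sum_apply]
    simp only [ContinuousLinearMap.smul_apply, smul_eq_mul]
    calc ∑ i, lam i * (a i) w
        = ∑ i, (lam' i * (a i) w + (γ i v) * (a i) w) := by
          exact Finset.sum_congr rfl (fun i _ => by rw [hdiff i, hu]; ring)
      _ = (∑ i, lam' i * (a i) w) + ∑ i, (γ i v) * (a i) w := by
          rw [Finset.sum_add_distrib]
      _ = ∑ i, lam' i * (a i) w := by rw [hg, add_zero]
  have hpc1 : (∑ i, lam i • a i) ∈ posCone a J := ⟨lam, hlam_supp, hlam_pos, rfl⟩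
  have hpc2 : (∑ i, lam i • a i) ∈ posCone a J' := by
    rw [hsum]
    exact ⟨lam', hlam'_supp, hlam'_pos, rfl⟩
  have hJJ' : J = J' := uniqT hfan hJK hJ'K hpc1 hpc2
  have hlameq : lam = lam' := by
    refine coeff_eq hKdown hfan hJK hlam_supp (fun i hi => ?_) hsum
    exact hlam'_supp i (hJJ' ▸ hi)
  funext i
  by_cases h0 : y i = 0
  · rw [h0, ((hzero i).1 h0)]
  · have h1 : lam i = lam' i := congrFun hlameq i
    rw [hlam, hlam'] at h1
    simp only [] at h1
    rw [if_neg h0, if_neg h0] at h1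
    have h2 : Real.log |y i| = Real.log |y' i| := by linarith
    have h0' : y' i ≠ 0 := fun h => h0 ((hzero i).2 h)
    have h3 : |y i| = |y' i| := by
      rw [← Real.exp_log (abs_pos.2 h0), ← Real.exp_log (abs_pos.2 h0'), h2]
    have h4 : |y' i| = Real.exp (u i) * |y i| := by
      rw [← hvy i, abs_mul, Real.abs_exp, hu]
    have h5 : Real.exp (u i) = 1 := by
      have h6 : |y i| ≠ 0 := abs_ne_zero.2 h0
      have h7 : Real.exp (u i) * |y i| = 1 * |y i| := by
        rw [← h4, h3]
        ring
      exact mul_right_cancel₀ h6 h7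
    rw [← hvy i, hu] at *
    rw [h5, one_mul]
theorem eq_zero_of_sum_zero
    (hfan : ∀ I ∈ K, ∀ J ∈ K, I ≠ J →
      intrinsicInterior ℝ (coneOf a I) ∩ intrinsicInterior ℝ (coneOf a J) = ∅)
    {s : Fin m → ℝ}
    (hTp : {i | 0 < s i} ∈ K) (hTn : {i | s i < 0} ∈ K)
    (hsa : ∑ i, s i • a i = 0) : ∀ i, s i = 0 := by
  have key : ∑ i, max (s i) 0 • a i = ∑ i, max (-s i) 0 • a i := by
    ext w
    have hg : (∑ i, s i • a i) w = (0 : W →L[ℝ] ℝ) w := by rw [hsa]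
    rw [ContinuousLinearMap.sum_apply, ContinuousLinearMap.zero_apply] at hg
    simp only [ContinuousLinearMap.smul_apply, smul_eq_mul] at hg
    rw [ContinuousLinearMap.sum_apply, ContinuousLinearMap.sum_apply]
    simp only [ContinuousLinearMap.smul_apply, smul_eq_mul]
    calc ∑ i, max (s i) 0 * (a i) w
        = ∑ i, (max (-s i) 0 * (a i) w + s i * (a i) w) := by
          refine Finset.sum_congr rfl (fun i _ => ?_)
          have hmi : max (s i) 0 = max (-s i) 0 + s i := by
            rcases le_total (s i) 0 with h | h
            · rw [max_eq_right h, max_eq_left (by linarith)]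
              ring
            · rw [max_eq_left h, max_eq_right (by linarith)]
              ring
          rw [hmi]
          ring
      _ = (∑ i, max (-s i) 0 * (a i) w) + ∑ i, s i * (a i) w := by
          rw [Finset.sum_add_distrib]
      _ = ∑ i, max (-s i) 0 * (a i) w := by rw [hg, add_zero]
  have hp : (∑ i, max (s i) 0 • a i) ∈ posCone a {i | 0 < s i} := by
    refine ⟨fun i => max (s i) 0, fun i hi => ?_, fun i hi => ?_, rfl⟩
    · exact max_eq_right (le_of_not_gt hi)
    · exact lt_max_of_lt_left hi
  have hn : (∑ i, max (s i) 0 • a i) ∈ posCone a {i | s i < 0} := by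
    rw [key]
    refine ⟨fun i => max (-s i) 0, fun i hi => ?_, fun i hi => ?_, rfl⟩
    · refine max_eq_right ?_
      rw [Set.mem_setOf_eq, not_lt] at hi
      linarith
    · rw [Set.mem_setOf_eq] at hi
      refine lt_max_of_lt_left ?_
      linarith
  have hTeq := uniqT hfan hTp hTn hp hn
  intro i
  rcases lt_trichotomy (s i) 0 with hlt | heq | hgt
  · have h1 : i ∈ {i | 0 < s i} := hTeq ▸ hlt
    linarith [h1.out]
  · exact heq
  · have h1 : i ∈ {i | s i < 0} := hTeq.symm ▸ hgt
    linarith [h1.out]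

theorem RK_abs_le {z : Fin m → ℝ} (hz : z ∈ RK K) : ∀ i, |z i| ≤ 1 := by
  obtain ⟨I, hI, hIeq, hIle⟩ := hz
  intro i
  by_cases hi : i ∈ I
  · exact hIle i hi
  · exact (hIeq i hi).le

theorem RK_compact : IsCompact (RK (m := m) K) := by
  have hclosed : IsClosed (RK (m := m) K) := by
    have hrw : RK (m := m) K = ⋃ I ∈ K,
        {x : Fin m → ℝ | (∀ i ∉ I, |x i| = 1) ∧ ∀ i ∈ I, |x i| ≤ 1} := by
      ext x
      simp only [RK, Set.mem_setOf_eq, Set.mem_iUnion]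
      tauto
    rw [hrw]
    refine (Set.toFinite K).isClosed_biUnion (fun I _ => ?_)
    have hrw2 : {x : Fin m → ℝ | (∀ i ∉ I, |x i| = 1) ∧ ∀ i ∈ I, |x i| ≤ 1}
        = (⋂ i, ⋂ (_ : i ∉ I), {x : Fin m → ℝ | |x i| = 1})
          ∩ ⋂ i, ⋂ (_ : i ∈ I), {x : Fin m → ℝ | |x i| ≤ 1} := by
      ext x
      simp [Set.mem_iInter]
    rw [hrw2]
    refine IsClosed.inter ?_ ?_
    · exact isClosed_iInter (fun i => isClosed_iInter (fun _ =>
        isClosed_eq ((continuous_apply i).abs) continuous_const))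
    · exact isClosed_iInter (fun i => isClosed_iInter (fun _ =>
        isClosed_le ((continuous_apply i).abs) continuous_const))
  have hbdd : RK (m := m) K ⊆ Metric.closedBall 0 1 := by
    intro x hx
    rw [Metric.mem_closedBall, dist_zero_right]
    rw [pi_norm_le_iff_of_nonneg zero_le_one]
    intro i
    rw [Real.norm_eq_abs]
    exact RK_abs_le hx i
  exact Metric.isCompact_of_isClosed_isBounded hclosed
    (Metric.isBounded_closedBall.subset hbdd)

theorem orbit_comp {x y z : Fin m → ℝ} {v w : V}
    (h1 : ∀ i, Real.exp (γ i v) * x i = y i)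
    (h2 : ∀ i, Real.exp (γ i w) * x i = z i) :
    ∀ i, Real.exp (γ i (w - v)) * y i = z i := by
  intro i
  rw [← h1 i, ← h2 i, map_sub, Real.exp_sub]
  have hne := Real.exp_ne_zero (γ i v)
  field_simp

theorem rep_continuous
    (hspan : Submodule.span ℝ (Set.range γ) = ⊤)
    (hW : ∀ y : Fin m → ℝ, y ∈ W ↔ ∑ i, y i • γ i = 0)
    (ha : ∀ (i : Fin m) (w : W), a i w = (w : Fin m → ℝ) i)
    (hKdown : ∀ I ∈ K, ∀ J ⊆ I, J ∈ K)
    (hfan : ∀ I ∈ K, ∀ J ∈ K, I ≠ J →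
      intrinsicInterior ℝ (coneOf a I) ∩ intrinsicInterior ℝ (coneOf a J) = ∅)
    (rep : {x : Fin m → ℝ // {i | x i = 0} ∈ K} → (Fin m → ℝ))
    (hrep1 : ∀ x, rep x ∈ RK K)
    (hrep2 : ∀ x, ∃ v : V, ∀ i, Real.exp (γ i v) * x.1 i = rep x i) :
    Continuous rep := by
  apply SeqContinuous.continuous
  intro xs p hxs
  apply tendsto_of_subseq_tendsto
  intro ns hns
  set q : ℕ → {x : Fin m → ℝ // {i | x i = 0} ∈ K} := fun k => xs (ns k) with hqdef
  have hq : Tendsto q atTop (𝓝 p) := hxs.comp hns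
  obtain ⟨ystar, hystarRK, ms, hms_mono, hms⟩ :=
    (RK_compact (K := K)).tendsto_subseq (fun k => hrep1 (q k))
  choose vf hvf using (fun k => hrep2 (q (ms k)))
  have hq2 : Tendsto (fun k => q (ms k)) atTop (𝓝 p) := hq.comp hms_mono.tendsto_atTop
  have hcoord : ∀ i, Tendsto (fun k => (q (ms k)).1 i) atTop (𝓝 (p.1 i)) := by
    intro i
    have hcv : Continuous (fun z : {x : Fin m → ℝ // {i | x i = 0} ∈ K} => z.1 i) :=
      (continuous_apply i).comp continuous_subtype_val
    exact (hcv.tendsto p).comp hq2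
  have hycoord : ∀ i, Tendsto (fun k => rep (q (ms k)) i) atTop (𝓝 (ystar i)) :=
    fun i => ((continuous_apply i).tendsto ystar).comp hms
  have hkey : ∃ vstar : V, ∀ i, Real.exp (γ i vstar) * p.1 i = ystar i := by
    by_cases hbd : ∃ ks : ℕ → ℕ, StrictMono ks ∧
        ∃ vstar : V, Tendsto (fun j => vf (ks j)) atTop (𝓝 vstar)
    · obtain ⟨ks, hksm, vstar, hkv⟩ := hbd
      refine ⟨vstar, fun i => ?_⟩
      have hL : Tendsto (fun j => Real.exp (γ i (vf (ks j))) * (q (ms (ks j))).1 i)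
          atTop (𝓝 (Real.exp (γ i vstar) * p.1 i)) := by
        refine Tendsto.mul ?_ ((hcoord i).comp hksm.tendsto_atTop)
        exact (Real.continuous_exp.tendsto _).comp (((γ i).continuous.tendsto _).comp hkv)
      have heq : (fun j => Real.exp (γ i (vf (ks j))) * (q (ms (ks j))).1 i)
          = fun j => rep (q (ms (ks j))) i := funext fun j => hvf (ks j) i
      rw [heq] at hL
      exact tendsto_nhds_unique hL ((hycoord i).comp hksm.tendsto_atTop)
    · exfalso
      have hninf : Tendsto (fun k => ‖vf k‖) atTop atTop := by
        by_contra hnot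
        rw [tendsto_atTop] at hnot
        push_neg at hnot
        obtain ⟨b, hb⟩ := hnot
        have hfreq : ∃ᶠ k in atTop, ‖vf k‖ < b := by
          refine hb.mono (fun k hk => ?_)
          exact hk
        obtain ⟨ks, hksm, hksb⟩ := Filter.extraction_of_frequently_atTop hfreq
        obtain ⟨vstar, -, ks2, hks2m, hks2⟩ :=
          (isCompact_closedBall (0:V) b).tendsto_subseq (x := fun j => vf (ks j))
            (fun j => by
              rw [Metric.mem_closedBall, dist_zero_right]
              exact (hksb j).le)
        exact hbd ⟨ks ∘ ks2, hksm.comp hks2m, vstar, hks2⟩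
      set useq : ℕ → V := fun k => ‖vf k‖⁻¹ • vf k with huseq
      have humem : ∀ k, useq k ∈ Metric.closedBall (0:V) 1 := by
        intro k
        rw [Metric.mem_closedBall, dist_zero_right, huseq]
        simp only []
        rw [norm_smul, norm_inv, norm_norm]
        by_cases h : vf k = 0
        · simp [h]
        · rw [inv_mul_cancel₀ (norm_ne_zero_iff.2 h)]
      obtain ⟨ustar, -, ks, hksm, hks⟩ :=
        (isCompact_closedBall (0:V) 1).tendsto_subseq humem
      have hksnorm : Tendsto (fun j => ‖vf (ks j)‖) atTop atTop :=
        hninf.comp hksm.tendsto_atTop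
      have hustar1 : ‖ustar‖ = 1 := by
        have h1 : Tendsto (fun j => ‖useq (ks j)‖) atTop (𝓝 ‖ustar‖) :=
          (continuous_norm.tendsto _).comp hks
        have h2 : ∀ᶠ j in atTop, ‖useq (ks j)‖ = 1 := by
          filter_upwards [hksnorm.eventually_ge_atTop 1] with j hj
          have hne : vf (ks j) ≠ 0 := by
            intro h
            rw [h, norm_zero] at hj
            linarith
          rw [huseq]
          simp only []
          rw [norm_smul, norm_inv, norm_norm, inv_mul_cancel₀ (norm_ne_zero_iff.2 hne)]
        have h4 : Tendsto (fun _ : ℕ => (1:ℝ)) atTop (𝓝 ‖ustar‖) :=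
          h1.congr' (by filter_upwards [h2] with j hj; rw [hj])
        exact tendsto_nhds_unique h4 tendsto_const_nhds
      have hgam : ∀ i, Tendsto (fun j => γ i (useq (ks j))) atTop (𝓝 (γ i ustar)) :=
        fun i => (((γ i).continuous.tendsto _)).comp hks
      set s : Fin m → ℝ := fun i => γ i ustar with hsdef
      have hsle : ∀ i, p.1 i ≠ 0 → s i ≤ 0 := by
        intro i hpi
        have h0 : 0 < |p.1 i| := abs_pos.2 hpi
        have habs : Tendsto (fun k => |(q (ms k)).1 i|) atTop (𝓝 |p.1 i|) :=
          (continuous_abs.tendsto _).comp (hcoord i)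
        have hev : ∀ᶠ k in atTop, |p.1 i| / 2 ≤ |(q (ms k)).1 i| :=
          habs.eventually (eventually_ge_nhds (by linarith))
        have hb : ∀ k, Real.exp (γ i (vf k)) * |(q (ms k)).1 i| ≤ 1 := by
          intro k
          have h1 := hvf k i
          have h2 : |rep (q (ms k)) i| ≤ 1 := RK_abs_le (hrep1 _) i
          calc Real.exp (γ i (vf k)) * |(q (ms k)).1 i|
              = |Real.exp (γ i (vf k)) * (q (ms k)).1 i| := by
                rw [abs_mul, Real.abs_exp]
            _ = |rep (q (ms k)) i| := by rw [h1]
            _ ≤ 1 := h2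
        set C : ℝ := Real.log (2 / |p.1 i|) with hC
        have hev2 : ∀ᶠ k in atTop, γ i (vf k) ≤ C := by
          filter_upwards [hev] with k hk
          have hexp := Real.exp_pos (γ i (vf k))
          have h4 : Real.exp (γ i (vf k)) * (|p.1 i| / 2) ≤ 1 := by
            calc Real.exp (γ i (vf k)) * (|p.1 i| / 2)
                ≤ Real.exp (γ i (vf k)) * |(q (ms k)).1 i| := by nlinarith
              _ ≤ 1 := hb k
          have h5 : Real.exp (γ i (vf k)) ≤ 2 / |p.1 i| := by
            rw [le_div_iff₀ h0]
            nlinarith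
          calc γ i (vf k) = Real.log (Real.exp (γ i (vf k))) := (Real.log_exp _).symm
            _ ≤ C := Real.log_le_log (Real.exp_pos _) h5
        have hev3 : ∀ᶠ j in atTop, γ i (useq (ks j)) ≤ ‖vf (ks j)‖⁻¹ * max C 0 := by
          filter_upwards [hksm.tendsto_atTop.eventually hev2,
            hksnorm.eventually_ge_atTop 1] with j h1 h2
          have hn0 : (0:ℝ) < ‖vf (ks j)‖ := by linarith
          have heq : γ i (useq (ks j)) = ‖vf (ks j)‖⁻¹ * γ i (vf (ks j)) := by
            rw [huseq]
            simp only []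
            rw [map_smul, smul_eq_mul]
          rw [heq]
          have hinv : (0:ℝ) ≤ ‖vf (ks j)‖⁻¹ := inv_nonneg.2 hn0.le
          calc ‖vf (ks j)‖⁻¹ * γ i (vf (ks j))
              ≤ ‖vf (ks j)‖⁻¹ * C := mul_le_mul_of_nonneg_left h1 hinv
            _ ≤ ‖vf (ks j)‖⁻¹ * max C 0 := mul_le_mul_of_nonneg_left (le_max_left _ _) hinv
        have hlim0 : Tendsto (fun j => ‖vf (ks j)‖⁻¹ * max C 0) atTop (𝓝 0) := by
          have h6 : Tendsto (fun j => ‖vf (ks j)‖⁻¹) atTop (𝓝 0) :=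
            hksnorm.inv_tendsto_atTop
          have h7 := h6.mul_const (max C 0)
          rwa [zero_mul] at h7
        exact le_of_tendsto_of_tendsto (hgam i) hlim0 hev3
      have hsneg : ∀ i, s i < 0 → ystar i = 0 := by
        intro i hsi
        have hev4 : ∀ᶠ j in atTop, γ i (useq (ks j)) ≤ s i / 2 :=
          (hgam i).eventually (eventually_le_nhds (by linarith))
        have htb : Tendsto (fun j => γ i (vf (ks j))) atTop atBot := by
          have hg2 : Tendsto (fun j => ‖vf (ks j)‖ * (s i / 2)) atTop atBot :=
            hksnorm.atTop_mul_const_of_neg (by linarith)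
          refine tendsto_atBot_mono' atTop ?_ hg2
          filter_upwards [hev4, hksnorm.eventually_ge_atTop 1] with j h1 h2
          have hn0 : (0:ℝ) < ‖vf (ks j)‖ := by linarith
          have hne : vf (ks j) ≠ 0 := by
            intro h
            rw [h, norm_zero] at hn0
            exact lt_irrefl 0 hn0
          have heq : γ i (vf (ks j)) = ‖vf (ks j)‖ * γ i (useq (ks j)) := by
            rw [huseq]
            simp only []
            rw [map_smul, smul_eq_mul, ← mul_assoc, mul_inv_cancel₀ (ne_of_gt hn0), one_mul]
          rw [heq]
          exact mul_le_mul_of_nonneg_left h1 hn0.le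
        have hexp0 : Tendsto (fun j => Real.exp (γ i (vf (ks j)))) atTop (𝓝 0) :=
          Real.tendsto_exp_atBot.comp htb
        have hx2 : Tendsto (fun j => (q (ms (ks j))).1 i) atTop (𝓝 (p.1 i)) :=
          (hcoord i).comp hksm.tendsto_atTop
        have h0 := hexp0.mul hx2
        rw [zero_mul] at h0
        have heq : (fun j => Real.exp (γ i (vf (ks j))) * (q (ms (ks j))).1 i)
            = fun j => rep (q (ms (ks j))) i := funext fun j => hvf (ks j) i
        rw [heq] at h0
        exact tendsto_nhds_unique ((hycoord i).comp hksm.tendsto_atTop) h0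
      have hTpK : {i | 0 < s i} ∈ K := by
        refine hKdown _ p.2 _ (fun i hi => ?_)
        by_contra hpi
        have := hsle i hpi
        linarith [hi.out]
      have hTnK : {i | s i < 0} ∈ K := by
        refine hKdown _ (stepA hKdown hystarRK) _ (fun i hi => ?_)
        exact hsneg i hi.out
      have hs0 : ∀ i, s i = 0 :=
        eq_zero_of_sum_zero hfan hTpK hTnK (sum_gamma_a hW ha ustar)
      have hu0 : ustar = 0 := gamma_sep hspan (fun i => hs0 i)
      rw [hu0, norm_zero] at hustar1
      norm_num at hustar1
  obtain ⟨vstar, hvstar⟩ := hkey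
  obtain ⟨v0, hv0⟩ := hrep2 p
  have hfin : ystar = rep p :=
    uniq_rep hW ha hKdown hfan hystarRK (hrep1 p) (v0 - vstar)
      (orbit_comp hvstar hv0)
  refine ⟨ms, ?_⟩
  rw [← hfin]
  exact hms

end main

end S9

/-- Under the fan and completeness conditions, `R_K ⊆ U(K)`,
every `V`-orbit of the exponential action on `U(K)` meets `R_K` in exactly one
point, and the composite of the inclusion `R_K ↪ U(K)` with the quotient
projection is a homeomorphism `R_K ≅ U(K)/V`. -/


theorem stmt9 {V : Type*} [NormedAddCommGroup V] [NormedSpace ℝ V]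
    [FiniteDimensional ℝ V] {m : ℕ} (γ : Fin m → (V →L[ℝ] ℝ))
    (hspan : Submodule.span ℝ (Set.range γ) = ⊤)
    (W : Submodule ℝ (Fin m → ℝ))
    (hW : ∀ y : Fin m → ℝ, y ∈ W ↔ ∑ i, y i • γ i = 0)
    (a : Fin m → (W →L[ℝ] ℝ))
    (ha : ∀ (i : Fin m) (w : W), a i w = (w : Fin m → ℝ) i)
    (K : Set (Set (Fin m))) (hKempty : ∅ ∈ K)
    (hKdown : ∀ I ∈ K, ∀ J ⊆ I, J ∈ K)
    (hfan : ∀ I ∈ K, ∀ J ∈ K, I ≠ J →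
      intrinsicInterior ℝ (coneOf a I) ∩ intrinsicInterior ℝ (coneOf a J) = ∅)
    (hcomplete : (⋃ I ∈ K, coneOf a I) = Set.univ) :
    RK K ⊆ {x : Fin m → ℝ | {i | x i = 0} ∈ K} ∧
    (∀ x : Fin m → ℝ, {i | x i = 0} ∈ K →
      ∃! y : Fin m → ℝ, y ∈ RK K ∧
        ∃ v : V, (fun i => Real.exp (γ i v) * x i) = y) ∧
    ∃ φ : RK K ≃ₜ Quot (orbitRel γ K),
      ∀ (y : RK K) (h : {i | (y : Fin m → ℝ) i = 0} ∈ K),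
        φ y = Quot.mk (orbitRel γ K) ⟨(y : Fin m → ℝ), h⟩ := by
  classical
  have part1 := S9.stepA (K := K) hKdown
  have part2 : ∀ x : Fin m → ℝ, {i | x i = 0} ∈ K →
      ∃! y : Fin m → ℝ, y ∈ RK K ∧ ∃ v : V, (fun i => Real.exp (γ i v) * x i) = y := by
    intro x hx
    obtain ⟨y, hyRK, v, hv⟩ := S9.exists_rep hspan hW ha hKdown hfan hcomplete x hx
    refine ⟨y, ⟨hyRK, v, hv⟩, ?_⟩
    rintro z ⟨hzRK, v', hv'⟩
    have hvp : ∀ i, Real.exp (γ i v) * x i = y i := fun i => congrFun hv i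
    have hvp' : ∀ i, Real.exp (γ i v') * x i = z i := fun i => congrFun hv' i
    exact S9.uniq_rep hW ha hKdown hfan hzRK hyRK (v - v') (S9.orbit_comp hvp' hvp)
  refine ⟨part1, part2, ?_⟩
  set rep : UK K → (Fin m → ℝ) := fun x => (part2 x.1 x.2).choose with hrepdef
  have hrep_spec : ∀ x : UK K,
      (rep x ∈ RK K ∧ ∃ v : V, (fun i => Real.exp (γ i v) * x.1 i) = rep x) ∧
      ∀ z, (z ∈ RK K ∧ ∃ v : V, (fun i => Real.exp (γ i v) * x.1 i) = z) → z = rep x :=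
    fun x => ⟨(part2 x.1 x.2).choose_spec.1, (part2 x.1 x.2).choose_spec.2⟩
  have hrep1 : ∀ x : UK K, rep x ∈ RK K := fun x => (hrep_spec x).1.1
  have hrep2 : ∀ x : UK K, ∃ v : V, ∀ i, Real.exp (γ i v) * x.1 i = rep x i := by
    intro x
    obtain ⟨v, hv⟩ := (hrep_spec x).1.2
    exact ⟨v, fun i => congrFun hv i⟩
  have hrepU : ∀ (x : UK K) z, z ∈ RK K →
      (∃ v : V, ∀ i, Real.exp (γ i v) * x.1 i = z i) → z = rep x := by
    intro x z hz hv
    obtain ⟨v, hv⟩ := hv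
    exact (hrep_spec x).2 z ⟨hz, v, funext hv⟩
  have hcont : Continuous rep :=
    S9.rep_continuous hspan hW ha hKdown hfan rep hrep1 hrep2
  have hrep_inv : ∀ x x' : UK K, orbitRel γ K x x' → rep x = rep x' := by
    intro x x' h
    obtain ⟨v, hv⟩ := h
    obtain ⟨w, hw⟩ := hrep2 x
    exact hrepU x' (rep x) (hrep1 x)
      ⟨w - v, S9.orbit_comp (fun i => congrFun hv i) hw⟩
  have hmemRK : ∀ y : (RK (m := m) K), {i | (y : Fin m → ℝ) i = 0} ∈ K :=
    fun y => part1 y.2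
  have hleft' : ∀ y : (RK (m := m) K), rep ⟨y.1, hmemRK y⟩ = y.1 := by
    intro y
    symm
    refine hrepU ⟨y.1, hmemRK y⟩ y.1 y.2 ⟨0, fun i => ?_⟩
    rw [map_zero, Real.exp_zero, one_mul]
  have hright' : ∀ (x : UK K) (hh : {i | rep x i = 0} ∈ K),
      orbitRel γ K ⟨rep x, hh⟩ x := by
    intro x hh
    obtain ⟨w, hw⟩ := hrep2 x
    have hid : ∀ i, Real.exp (γ i (0:V)) * x.1 i = x.1 i := fun i => by
      rw [map_zero, Real.exp_zero, one_mul]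
    exact ⟨0 - w, funext (S9.orbit_comp hw hid)⟩
  have hrightInv : ∀ z : Quot (orbitRel γ K),
      (fun y : (RK (m := m) K) => Quot.mk (orbitRel γ K) (⟨y.1, hmemRK y⟩ : UK K))
        ((Quot.lift (fun x : UK K => (⟨rep x, hrep1 x⟩ : (RK (m := m) K)))
          (fun x x' h => Subtype.ext (hrep_inv x x' h))) z) = z := by
    intro z
    induction z using Quot.ind with
    | _ x => exact Quot.sound (hright' x _)
  refine ⟨⟨⟨fun y => Quot.mk _ ⟨y.1, hmemRK y⟩,
      Quot.lift (fun x : UK K => (⟨rep x, hrep1 x⟩ : (RK (m := m) K)))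
        (fun x x' h => Subtype.ext (hrep_inv x x' h)),
      fun y => Subtype.ext (hleft' y),
      hrightInv⟩, ?_, ?_⟩, fun y h => rfl⟩
  · exact continuous_quot_mk.comp (Continuous.subtype_mk continuous_subtype_val _)
  · rw [isQuotientMap_quot_mk.continuous_iff]
    exact Continuous.subtype_mk hcont _
end

section
/- Let b₁,…,b_m ∈ ℝ and δ = Σ_{i=1}^m b_i γ_i ∈ V*. For a subset I ⊆ {1,…,m}: δ ∈ relint(cone{γ_i : i ∉ I}) if and only if there exists w ∈ W such that w_i + b_i = 0 for all i ∈ I and w_i + b_i > 0 for all i ∉ I, where w_i denotes the i-th coordinate of w as an element of ℝ^m (equivalently w_i = a_i(w)). -/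
open Metric

-- membership in intrinsicInterior via metric balls
lemma mem_intrinsicInterior_iff_ball {E : Type*} [NormedAddCommGroup E] [NormedSpace ℝ E]
    {s : Set E} {x : E} :
    x ∈ intrinsicInterior ℝ s ↔
      x ∈ affineSpan ℝ s ∧ ∃ ε > 0, ∀ y ∈ affineSpan ℝ s, dist y x < ε → y ∈ s := by
  unfold intrinsicInterior
  constructor
  · rintro ⟨x', hx', rfl⟩
    refine ⟨x'.2, ?_⟩
    rw [mem_interior_iff_mem_nhds, Metric.mem_nhds_iff] at hx'
    obtain ⟨ε, hε, hball⟩ := hx'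
    refine ⟨ε, hε, fun y hy hdy => ?_⟩
    exact hball (show (⟨y, hy⟩ : affineSpan ℝ s) ∈ ball x' ε by
      simpa [Metric.mem_ball, Subtype.dist_eq] using hdy)
  · rintro ⟨hx, ε, hε, h⟩
    refine ⟨⟨x, hx⟩, ?_, rfl⟩
    rw [mem_interior_iff_mem_nhds, Metric.mem_nhds_iff]
    exact ⟨ε, hε, fun y hy => h y y.2 (by simpa [Metric.mem_ball, Subtype.dist_eq] using hy)⟩

section aux
variable {E : Type*} [NormedAddCommGroup E] [NormedSpace ℝ E] {m : ℕ}

/-- the linear map sending coefficients to the combination -/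
noncomputable def fmap (γ : Fin m → E) : (Fin m → ℝ) →ₗ[ℝ] E where
  toFun d := ∑ i, d i • γ i
  map_add' x y := by simp [add_smul, Finset.sum_add_distrib]
  map_smul' c x := by simp [smul_smul, Finset.smul_sum]

@[simp] lemma fmap_apply (γ : Fin m → E) (d : Fin m → ℝ) : fmap γ d = ∑ i, d i • γ i := rfl

/-- coefficient vectors vanishing on I -/
def Usub (m : ℕ) (I : Set (Fin m)) : Submodule ℝ (Fin m → ℝ) where
  carrier := {d | ∀ i ∈ I, d i = 0}
  add_mem' hx hy i hi := by simp only [Pi.add_apply, hx i hi, hy i hi, add_zero]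
  zero_mem' := fun i _ => rfl
  smul_mem' c x hx i hi := by simp only [Pi.smul_apply, hx i hi, smul_zero]

lemma mem_Usub {I : Set (Fin m)} {d : Fin m → ℝ} : d ∈ Usub m I ↔ ∀ i ∈ I, d i = 0 := Iff.rfl

lemma coneOf_subset (γ : Fin m → E) (I : Set (Fin m)) :
    coneOf γ Iᶜ ⊆ ((Usub m I).map (fmap γ) : Set E) := by
  rintro x ⟨c, _, hc0, rfl⟩
  exact ⟨c, fun i hi => hc0 i (by simpa using hi), rfl⟩

lemma zero_mem_coneOf_s10 (γ : Fin m → E) (I : Set (Fin m)) : (0 : E) ∈ coneOf γ Iᶜ :=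
  ⟨0, fun _ => le_refl 0, fun _ _ => rfl, by simp⟩

lemma affineSpan_coneOf_s10 (γ : Fin m → E) (I : Set (Fin m)) :
    (affineSpan ℝ (coneOf γ Iᶜ) : Set E) = ((Usub m I).map (fmap γ) : Set E) := by
  apply Set.Subset.antisymm
  · refine subset_trans (affineSpan_subset_span) ?_
    exact Submodule.span_le.mpr (coneOf_subset γ I)
  · rintro x ⟨d, hd, rfl⟩
    have h1 : fmap γ (fun i => max (d i) 0) ∈ affineSpan ℝ (coneOf γ Iᶜ) :=
      subset_affineSpan ℝ _ ⟨_, fun i => le_max_right _ _,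
        fun i hi => by simp [hd i (by simpa using hi)], rfl⟩
    have h2 : fmap γ (fun i => max (-d i) 0) ∈ affineSpan ℝ (coneOf γ Iᶜ) :=
      subset_affineSpan ℝ _ ⟨_, fun i => le_max_right _ _,
        fun i hi => by simp [hd i (by simpa using hi)], rfl⟩
    have h0 : (0 : E) ∈ affineSpan ℝ (coneOf γ Iᶜ) :=
      subset_affineSpan ℝ _ (zero_mem_coneOf_s10 γ I)
    have := (affineSpan ℝ (coneOf γ Iᶜ)).smul_vsub_vadd_mem 1 h1 h2 h0
    have hdec : fmap γ d = fmap γ (fun i => max (d i) 0) - fmap γ (fun i => max (-d i) 0) := by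
      rw [← map_sub]
      congr 1
      funext i
      simp [max_zero_sub_max_neg_zero_eq_self]
    simpa [hdec, vsub_eq_sub, vadd_eq_add] using this

end aux


private lemma aux_tn {e n : ℝ} (he : 0 < e) (hn : 0 ≤ n) : e / (2 * (n + 1)) * n < e := by
  have h1 : (0:ℝ) < 2 * (n + 1) := by positivity
  rw [div_mul_eq_mul_div, div_lt_iff₀ h1]
  nlinarith

private lemma aux_pos {t d : ℝ} (ht : 0 < t) (hd : 0 ≤ d) : 0 < (1 + t)⁻¹ * (d + t * 1) := by
  have : 0 < d + t * 1 := by linarith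
  positivity

private lemma aux_C {C e : ℝ} (hC : 0 ≤ C) (he : 0 < e) : C * (e / (C + 1)) < e := by
  have h1 : (0:ℝ) < C + 1 := by linarith
  rw [mul_div_assoc', div_lt_iff₀ h1]
  nlinarith

set_option maxHeartbeats 800000

/-- For `δ = Σ b i • γ i` and `I ⊆ {1,…,m}`:
`δ ∈ relint cone{γ i : i ∉ I}` iff there is `w ∈ W` with `w i + b i = 0` for
`i ∈ I` and `w i + b i > 0` for `i ∉ I`. -/
theorem stmt10 {V : Type*} [NormedAddCommGroup V] [NormedSpace ℝ V]
    [FiniteDimensional ℝ V] {m : ℕ} (γ : Fin m → (V →L[ℝ] ℝ))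
    (hspan : Submodule.span ℝ (Set.range γ) = ⊤)
    (W : Submodule ℝ (Fin m → ℝ))
    (hW : ∀ y : Fin m → ℝ, y ∈ W ↔ ∑ i, y i • γ i = 0)
    (a : Fin m → (W →L[ℝ] ℝ))
    (ha : ∀ (i : Fin m) (w : W), a i w = (w : Fin m → ℝ) i)
    (b : Fin m → ℝ) (I : Set (Fin m)) :
    (∑ i, b i • γ i) ∈ intrinsicInterior ℝ (coneOf γ Iᶜ) ↔
      ∃ w : W, (∀ i ∈ I, (w : Fin m → ℝ) i + b i = 0) ∧
        ∀ i ∉ I, 0 < (w : Fin m → ℝ) i + b i := by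
  classical
  set δ : V →L[ℝ] ℝ := ∑ i, b i • γ i with hδ
  have hδf : δ = fmap γ b := rfl
  set M : Submodule ℝ (V →L[ℝ] ℝ) := (Usub m I).map (fmap γ) with hM
  have hAS : (affineSpan ℝ (coneOf γ Iᶜ) : Set (V →L[ℝ] ℝ)) = (M : Set (V →L[ℝ] ℝ)) := affineSpan_coneOf_s10 γ I
  rw [mem_intrinsicInterior_iff_ball]
  constructor
  · rintro ⟨hδspan, ε, hε, hball⟩
    have hδT : δ ∈ coneOf γ Iᶜ := hball δ hδspan (by simpa using hε)
    set χ : Fin m → ℝ := fun i => if i ∈ I then 0 else 1 with hχ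
    set p : V →L[ℝ] ℝ := fmap γ χ with hp
    have hpT : p ∈ coneOf γ Iᶜ := by
      refine ⟨χ, fun i => ?_, fun i hi => ?_, rfl⟩
      · by_cases h : i ∈ I <;> simp [hχ, h]
      · simp only [Set.notMem_compl_iff] at hi
        simp [hχ, hi]
    set n : ℝ := ‖δ - p‖ with hn
    have hn0 : 0 ≤ n := norm_nonneg _
    set t : ℝ := ε / (2 * (n + 1)) with htdef
    have ht : 0 < t := by positivity
    set y : V →L[ℝ] ℝ := δ + t • (δ - p) with hy
    have hymem : y ∈ affineSpan ℝ (coneOf γ Iᶜ) := by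
      rw [← AffineSubspace.mem_coe, hAS]
      exact M.add_mem (coneOf_subset γ I hδT)
        (M.smul_mem t (M.sub_mem (coneOf_subset γ I hδT) (coneOf_subset γ I hpT)))
    have hdist : dist y δ < ε := by
      rw [dist_eq_norm]
      have : y - δ = t • (δ - p) := by rw [hy]; abel
      rw [this]
      have hle : ‖t • (δ - p)‖ ≤ t * n := by
        simpa [Real.norm_eq_abs, abs_of_pos ht, hn] using norm_smul_le t (δ - p)
      have h1 : (0:ℝ) < 2 * (n + 1) := by positivity
      have h2 : t * n < ε := by rw [htdef]; exact aux_tn hε hn0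
      linarith
    obtain ⟨d, hd0, hdI, hyd⟩ := hball y hymem hdist
    set c' : Fin m → ℝ := fun i => (1 + t)⁻¹ * (d i + t * χ i) with hc'
    have ht1 : (0:ℝ) < 1 + t := by linarith
    have hfc' : fmap γ c' = δ := by
      have hcs : c' = (1 + t)⁻¹ • (d + t • χ) := by
        funext i; simp [hc', smul_eq_mul]
      have hyd' : fmap γ d = y := hyd.symm
      have hyp : fmap γ d + t • p = (1 + t) • δ := by
        rw [hyd', hy, hp]
        rw [smul_sub, add_smul, one_smul]; abel
      rw [hcs, map_smul, map_add, map_smul, hyp, smul_smul,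
        inv_mul_cancel₀ (ne_of_gt ht1), one_smul]
    have hwW : (fun i => c' i - b i) ∈ W := by
      rw [hW]
      have h2 : ∑ i, ((fun i => c' i - b i) i) • γ i = fmap γ c' - fmap γ b := by
        simp [sub_smul, Finset.sum_sub_distrib]
        rw [← Finset.sum_sub_distrib]; exact Finset.sum_congr rfl (fun i _ => by module)
      rw [h2, hfc', hδf, sub_self]
    refine ⟨⟨_, hwW⟩, fun i hi => ?_, fun i hi => ?_⟩
    · have hdi : d i = 0 := hdI i (by simpa using hi)
      simp [hc', hdi, hχ, hi]
    · have hdi : 0 ≤ d i := hd0 i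
      have hχi : χ i = 1 := by simp [hχ, hi]
      show 0 < (c' i - b i) + b i
      have hval : c' i = (1 + t)⁻¹ * (d i + t * χ i) := rfl
      rw [hval, hχi]
      linarith [aux_pos ht hdi]
  · rintro ⟨w, hwI, hwpos⟩
    set c : Fin m → ℝ := fun i => (w : Fin m → ℝ) i + b i with hc
    have hfc : fmap γ c = δ := by
      have hw0 : ∑ i, (w : Fin m → ℝ) i • γ i = 0 := (hW _).mp w.2
      have h2 : (∑ i, c i • γ i) = (∑ i, (w : Fin m → ℝ) i • γ i) + ∑ i, b i • γ i := by
        simp [hc, add_smul, Finset.sum_add_distrib]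
      show (∑ i, c i • γ i) = δ
      rw [h2, hw0, zero_add]
    have hδT : δ ∈ coneOf γ Iᶜ := by
      refine ⟨c, fun i => ?_, fun i hi => ?_, hfc.symm⟩
      · by_cases h : i ∈ I
        · rw [hc]; simp [hwI i h]
        · exact le_of_lt (hwpos i h)
      · simp only [Set.notMem_compl_iff] at hi
        rw [hc]; simp [hwI i hi]
    have hδM : δ ∈ M := coneOf_subset γ I hδT
    -- build a continuous linear section
    set F : Usub m I →ₗ[ℝ] M :=
      LinearMap.codRestrict M ((fmap γ).domRestrict (Usub m I))
        (fun u => ⟨u, u.2, rfl⟩) with hF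
    have hFsurj : LinearMap.range F = ⊤ := by
      rw [LinearMap.range_eq_top]
      rintro ⟨x, dd, hdd, rfl⟩
      exact ⟨⟨dd, hdd⟩, rfl⟩
    haveI : Module.Free ℝ M := Module.Free.of_divisionRing ℝ M
    haveI : Module.Projective ℝ M := Module.Projective.of_free
    obtain ⟨s, hs⟩ := F.exists_rightInverse_of_surjective hFsurj
    haveI hfinE : FiniteDimensional ℝ (V →L[ℝ] ℝ) := inferInstance
    haveI : FiniteDimensional ℝ M := inferInstance
    letI : SeminormedAddCommGroup M := inferInstance
    letI : NormedSpace ℝ M := inferInstance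
    set S : M →L[ℝ] (Fin m → ℝ) :=
      LinearMap.toContinuousLinearMap (𝕜 := ℝ) (E := M) (F' := Fin m → ℝ) ((Usub m I).subtype.comp s : M →ₗ[ℝ] (Fin m → ℝ)) with hS
    set C : ℝ := ‖S‖ with hCdef
    have hC : 0 ≤ C := by rw [hCdef]; exact norm_nonneg S
    -- positive lower bound for c off I
    obtain ⟨ε₀, hε₀, hlow⟩ : ∃ ε₀ > 0, ∀ i ∉ I, ε₀ ≤ c i := by
      set s' : Finset (Fin m) := Finset.univ.filter (fun i => i ∉ I) with hs'
      by_cases hne : s'.Nonempty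
      · refine ⟨s'.inf' hne c, ?_, fun i hi => ?_⟩
        · show (0:ℝ) < s'.inf' hne c
          rw [Finset.lt_inf'_iff]
          exact fun i hi => hwpos i (by simpa [hs'] using hi)
        · exact Finset.inf'_le c (by simp [hs', hi])
      · exact ⟨1, one_pos, fun i hi => absurd ⟨i, by simp [hs', hi]⟩ hne⟩
    refine ⟨subset_affineSpan ℝ _ hδT, ε₀ / (C + 1), by positivity, fun y hy hdy => ?_⟩
    have hyM : y ∈ M := by
      have h : y ∈ (affineSpan ℝ (coneOf γ Iᶜ) : Set (V →L[ℝ] ℝ)) := hy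
      rw [hAS] at h
      exact h
    set z : M := ⟨y - δ, M.sub_mem hyM hδM⟩ with hz
    have hzn : ‖z‖ < ε₀ / (C + 1) := by
      rw [hz]
      have : ‖(⟨y - δ, M.sub_mem hyM hδM⟩ : M)‖ = ‖y - δ‖ := rfl
      rw [this, ← dist_eq_norm]; exact hdy
    set d : Fin m → ℝ := fun i => c i + (S z) i with hd
    have hSzc : (S z : Fin m → ℝ) = ((s z : Usub m I) : Fin m → ℝ) := rfl
    have hSz : fmap γ ((S z : Fin m → ℝ)) = y - δ := by
      have h1 : F (s z) = z := LinearMap.congr_fun hs z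
      rw [hSzc]
      have : fmap γ ((s z : Usub m I) : Fin m → ℝ) = ((F (s z) : M) : V →L[ℝ] ℝ) := rfl
      rw [this, h1]
    have hSle : ‖S z‖ ≤ C * ‖z‖ := S.le_opNorm z
    clear_value z
    clear_value C
    have hbound : ∀ i, |(S z) i| ≤ C * ‖z‖ := fun i => by
      calc |(S z) i| ≤ ‖S z‖ := by
            simpa using norm_le_pi_norm (S z) i
        _ ≤ C * ‖z‖ := hSle
    have hCz : C * ‖z‖ < ε₀ := by
      calc C * ‖z‖ ≤ C * (ε₀ / (C + 1)) :=
            mul_le_mul_of_nonneg_left (le_of_lt hzn) hC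
        _ < ε₀ := aux_C hC hε₀
    refine ⟨d, fun i => ?_, fun i hi => ?_, ?_⟩
    · by_cases h : i ∈ I
      · have hczero : (S z) i = 0 := (s z).2 i h
        have : c i = 0 := by rw [hc]; simpa using hwI i h
        simp [hd, hczero, this]
      · have := hbound i
        have := abs_le.mp (hbound i)
        have hci := hlow i h
        simp only [hd]
        linarith
    · simp only [Set.notMem_compl_iff] at hi
      have hczero : (S z) i = 0 := (s z).2 i hi
      have : c i = 0 := by rw [hc]; simpa using hwI i hi
      simp [hd, hczero, this]
    · have : fmap γ d = y := by
        have hds : d = c + (S z : Fin m → ℝ) := rfl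
        rw [hds, map_add, hfc, hSz]; abel
      rw [← this]; rfl
end

section
/- Suppose the polyhedron P is generic. Then for every x ∈ ℝ^m with μ(x) = δ: (i) the set {i : x_i = 0} belongs to K_P (hence the level set μ^{-1}(δ) is contained in U(K_P) = {x ∈ ℝ^m : {i : x_i = 0} ∈ K_P}); and (ii) the set of vectors {γ_i : x_i ≠ 0} spans V* (so that δ is a regular value of μ). -/
/-- If the polyhedron
`P = {w : a i w + b i ≥ 0, i = 1,…,m}` is generic, then every `x ∈ ℝ^m` with
`μ(x) = Σ x i ^ 2 • γ i = δ` has zero set `{i : x i = 0}` belonging to `K_P`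
(so `μ⁻¹(δ) ⊆ U(K_P)`) and the set `{γ i : x i ≠ 0}` spans `V*`
(so `δ` is a regular value of `μ`). -/
theorem stmt11 {W : Type*} [NormedAddCommGroup W] [NormedSpace ℝ W]
    [FiniteDimensional ℝ W] {m : ℕ} (a : Fin m → (W →L[ℝ] ℝ))
    (hspan : Submodule.span ℝ (Set.range a) = ⊤) (b : Fin m → ℝ)
    (hPne : {w : W | ∀ i, 0 ≤ a i w + b i}.Nonempty)
    (hgen : ∀ w ∈ {w : W | ∀ i, 0 ≤ a i w + b i},
      LinearIndependent ℝ (fun i : {i : Fin m // a i w + b i = 0} => a i.1))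
    (V : Submodule ℝ (Fin m → ℝ))
    (hV : ∀ y : Fin m → ℝ, y ∈ V ↔ ∑ i, y i • a i = 0)
    (γ : Fin m → (V →L[ℝ] ℝ))
    (hγ : ∀ (i : Fin m) (v : V), γ i v = (v : Fin m → ℝ) i)
    (x : Fin m → ℝ)
    (hx : ∑ i, x i ^ 2 • γ i = ∑ i, b i • γ i) :
    {i | x i = 0} ∈ {I : Set (Fin m) |
        ∃ w : W, (∀ j, 0 ≤ a j w + b j) ∧ ∀ i ∈ I, a i w + b i = 0} ∧
      Submodule.span ℝ (γ '' {i | x i ≠ 0}) = ⊤ := by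
  classical
  set c : Fin m → ℝ := fun i => x i ^ 2 - b i with hc
  -- the vector c annihilates V
  have hcV : ∀ v : V, ∑ i, c i * (v : Fin m → ℝ) i = 0 := by
    intro v
    have h := congrArg (fun f : V →L[ℝ] ℝ => f v) hx
    simp only [ContinuousLinearMap.coe_sum', Finset.sum_apply,
      ContinuousLinearMap.coe_smul', Pi.smul_apply, hγ, smul_eq_mul] at h
    simp only [hc, sub_mul, Finset.sum_sub_distrib, h, sub_self]
  -- the linear map A
  set a' : Fin m → Module.Dual ℝ W := fun i => (a i : W →ₗ[ℝ] ℝ) with ha'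
  set A : (Fin m → ℝ) →ₗ[ℝ] Module.Dual ℝ W := Fintype.linearCombination ℝ a' with hA
  have hAapply : ∀ y : Fin m → ℝ, A y = ∑ i, y i • a' i := fun _ => rfl
  have hAsingle : ∀ i, A (Pi.single i 1) = a' i := by
    intro i
    simp [hA, Fintype.linearCombination_apply_single]
  -- span of a' is top
  have hspan' : Submodule.span ℝ (Set.range a') = ⊤ := by
    have hsurj : Function.Surjective (ContinuousLinearMap.coeLM ℝ :
        (W →L[ℝ] ℝ) →ₗ[ℝ] (W →ₗ[ℝ] ℝ)) := fun g =>
      ⟨LinearMap.toContinuousLinearMap g, LinearMap.coe_toContinuousLinearMap g⟩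
    have : Set.range a' = (ContinuousLinearMap.coeLM ℝ :
        (W →L[ℝ] ℝ) →ₗ[ℝ] (W →ₗ[ℝ] ℝ)) '' (Set.range a) := by
      rw [← Set.range_comp]; rfl
    rw [this, ← Submodule.map_span, hspan, Submodule.map_top, LinearMap.range_eq_top.mpr hsurj]
  -- A is surjective
  have hAsurj : Function.Surjective A := by
    rw [← LinearMap.range_eq_top]
    rw [eq_top_iff, ← hspan']
    rw [Submodule.span_le]
    rintro _ ⟨i, rfl⟩
    exact ⟨Pi.single i 1, hAsingle i⟩
  -- ker A = V
  have hkerA : LinearMap.ker A = V := by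
    ext y
    rw [LinearMap.mem_ker, hV, hAapply]
    constructor
    · intro h
      ext w
      have := congrArg (fun f : Module.Dual ℝ W => f w) h
      simpa [ha'] using this
    · intro h
      ext w
      have := congrArg (fun f : W →L[ℝ] ℝ => f w) h
      simpa [ha'] using this
  -- the functional f
  set f : (Fin m → ℝ) →ₗ[ℝ] ℝ := Fintype.linearCombination ℝ c with hf
  have hfapply : ∀ y : Fin m → ℝ, f y = ∑ i, y i * c i := fun _ => rfl
  have hfker : LinearMap.ker A ≤ LinearMap.ker f := by
    intro y hy
    rw [LinearMap.mem_ker, hfapply]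
    rw [hkerA] at hy
    have := hcV ⟨y, hy⟩
    simpa [mul_comm] using this
  -- factor f through A
  obtain ⟨B, hB⟩ := A.exists_rightInverse_of_surjective (LinearMap.range_eq_top.mpr hAsurj)
  set g : Module.Dual ℝ (Module.Dual ℝ W) := f ∘ₗ B with hg
  have hgA : ∀ y, g (A y) = f y := by
    intro y
    have hmem : B (A y) - y ∈ LinearMap.ker A := by
      rw [LinearMap.mem_ker, map_sub, sub_eq_zero]
      have := congrArg (fun t : Module.Dual ℝ W →ₗ[ℝ] Module.Dual ℝ W => t (A y)) hB
      simpa using this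
    have := hfker hmem
    rw [LinearMap.mem_ker, map_sub, sub_eq_zero] at this
    simpa [hg] using this
  -- the witness point w
  set w : W := (Module.evalEquiv ℝ W).symm g with hw
  have hwa : ∀ i, a i w = c i := by
    intro i
    have h1 : a' i w = g (a' i) := Module.apply_evalEquiv_symm_apply ℝ W (a' i) g
    have h2 : g (a' i) = f (Pi.single i 1) := by rw [← hAsingle i, hgA]
    have h3 : f (Pi.single i 1) = c i := by
      rw [hfapply]
      simp [Pi.single_apply]
    exact h1.trans (h2.trans h3)
  have hwP : ∀ j, 0 ≤ a j w + b j := by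
    intro j
    rw [hwa j]
    simp [hc, sq_nonneg]
  have hwzero : ∀ i, a i w + b i = 0 ↔ x i = 0 := by
    intro i
    have h1 : a i w + b i = x i ^ 2 := by rw [hwa i]; simp [hc]
    rw [h1]
    exact pow_eq_zero_iff two_ne_zero
  refine ⟨⟨w, hwP, fun i hi => (hwzero i).mpr hi⟩, ?_⟩
  -- Part (ii)
  have hker : ∀ v : V, (∀ i, x i ≠ 0 → (v : Fin m → ℝ) i = 0) → v = 0 := by
    intro v hv
    have hVv : ∑ i, (v : Fin m → ℝ) i • a i = 0 := (hV v).1 v.2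
    have hsub : ∑ i : {i : Fin m // a i w + b i = 0}, (v : Fin m → ℝ) i.1 • a i.1 = 0 := by
      have h1 : ∑ i ∈ Finset.univ.filter (fun i => a i w + b i = 0),
          (v : Fin m → ℝ) i • a i = ∑ i, (v : Fin m → ℝ) i • a i :=
        Finset.sum_filter_of_ne (fun i _ hne => by
          by_contra h
          exact hne (by rw [hv i fun hx0 => h ((hwzero i).mpr hx0), zero_smul]))
      rw [← Finset.sum_subtype (Finset.univ.filter (fun i => a i w + b i = 0))
        (by simp) (fun i => (v : Fin m → ℝ) i • a i), h1, hVv]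
    have hli := hgen w hwP
    rw [Fintype.linearIndependent_iff] at hli
    have hz := hli (fun i => (v : Fin m → ℝ) i.1) hsub
    ext i
    by_cases hxi : x i = 0
    · exact hz ⟨i, (hwzero i).mpr hxi⟩
    · exact hv i hxi
  -- transfer to Module.Dual via coeLM
  set cL : (V →L[ℝ] ℝ) →ₗ[ℝ] (V →ₗ[ℝ] ℝ) := ContinuousLinearMap.coeLM ℝ with hcL
  have hcLinj : Function.Injective cL := by
    intro p q h
    ext v
    exact congrArg (fun t : V →ₗ[ℝ] ℝ => t v) h
  set S' : Submodule ℝ (Module.Dual ℝ V) :=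
    Submodule.span ℝ ((fun i => cL (γ i)) '' {i | x i ≠ 0}) with hS'
  have hco : S'.dualCoannihilator = ⊥ := by
    rw [Submodule.eq_bot_iff]
    intro v hv
    rw [Submodule.mem_dualCoannihilator] at hv
    refine hker v fun i hi => ?_
    have := hv (cL (γ i)) (Submodule.subset_span ⟨i, hi, rfl⟩)
    simpa [hcL, hγ] using this
  have hS'top : S' = ⊤ := by
    rw [← Subspace.dualCoannihilator_dualAnnihilator_eq (W := S'), hco,
      Submodule.dualAnnihilator_bot]
  have hmap : Submodule.map cL (Submodule.span ℝ (γ '' {i | x i ≠ 0})) = S' := by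
    rw [Submodule.map_span, hS', ← Set.image_comp]
    rfl
  have : Submodule.map cL (Submodule.span ℝ (γ '' {i | x i ≠ 0})) =
      Submodule.map cL ⊤ := by
    rw [hmap, hS'top, Submodule.map_top, LinearMap.range_eq_top.mpr
      (fun g => ⟨LinearMap.toContinuousLinearMap g, LinearMap.coe_toContinuousLinearMap g⟩)]
  exact Submodule.map_injective_of_injective hcLinj this
end

section
/- Suppose the polyhedron P is generic. Then for every x ∈ U(K_P) = {x ∈ ℝ^m : {i : x_i = 0} ∈ K_P}, the V-orbit {v • x : v ∈ V} of the exponential action contains exactly one point y with μ(y) = δ, that is, exactly one point of the nondegenerate intersection of quadrics {y ∈ ℝ^m : Σ_{i=1}^m γ_i y_i² = δ}. -/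
open Real Finset

private lemma aux_exp_lower (K t : ℝ) : K * max t 0 ≤ Real.exp (2*t) / 2 + 2*K^2 := by
  rcases le_or_gt t 0 with h | h
  · rw [max_eq_right h, mul_zero]
    positivity
  · rw [max_eq_left h.le]
    have h1 : t + 1 ≤ Real.exp t := Real.add_one_le_exp t
    have h2 : Real.exp (2*t) = Real.exp t * Real.exp t := by
      rw [← Real.exp_add]; ring_nf
    nlinarith [sq_nonneg (t - 2*K), Real.exp_pos t, sq_nonneg t]

set_option maxHeartbeats 1000000 in
/-- If the polyhedron
`P = {w : a i w + b i ≥ 0, i = 1,…,m}` is generic, then for every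
`x ∈ U(K_P)` the `V`-orbit of `x` under the exponential action
`v • x = (e^{v₁} x₁, …, e^{v_m} x_m)` contains exactly one point `y` of the
intersection of quadrics `Σ γ i • y i ^ 2 = δ`. -/
theorem stmt12 {W : Type*} [NormedAddCommGroup W] [NormedSpace ℝ W]
    [FiniteDimensional ℝ W] {m : ℕ} (a : Fin m → (W →L[ℝ] ℝ))
    (hspan : Submodule.span ℝ (Set.range a) = ⊤) (b : Fin m → ℝ)
    (hPne : {w : W | ∀ i, 0 ≤ a i w + b i}.Nonempty)
    (hgen : ∀ w ∈ {w : W | ∀ i, 0 ≤ a i w + b i},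
      LinearIndependent ℝ (fun i : {i : Fin m // a i w + b i = 0} => a i.1))
    (V : Submodule ℝ (Fin m → ℝ))
    (hV : ∀ y : Fin m → ℝ, y ∈ V ↔ ∑ i, y i • a i = 0)
    (γ : Fin m → (V →L[ℝ] ℝ))
    (hγ : ∀ (i : Fin m) (v : V), γ i v = (v : Fin m → ℝ) i)
    (x : Fin m → ℝ)
    (hx : {i | x i = 0} ∈ {I : Set (Fin m) |
        ∃ w : W, (∀ j, 0 ≤ a j w + b j) ∧ ∀ i ∈ I, a i w + b i = 0}) :
    ∃! y : Fin m → ℝ,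
      (∃ v ∈ V, ∀ i, Real.exp (v i) * x i = y i) ∧
        ∑ i, y i ^ 2 • γ i = ∑ i, b i • γ i := by
  classical
  obtain ⟨w₀, hw₀P, hw₀Z⟩ := hx
  set c : Fin m → ℝ := fun i => a i w₀ + b i with hc
  have hc0 : ∀ i, 0 ≤ c i := hw₀P
  have hcZ : ∀ i, x i = 0 → c i = 0 := fun i hi => hw₀Z i hi
  -- For v ∈ V, ∑ v i * a i w₀ = 0
  have hsum0 : ∀ v ∈ V, ∑ i, v i * a i w₀ = 0 := by
    intro v hv
    have h1 := (hV v).1 hv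
    have h2 := congrArg (fun f : W →L[ℝ] ℝ => f w₀) h1
    simpa using h2
  have hbc : ∀ v ∈ V, ∑ i, b i * v i = ∑ i, c i * v i := by
    intro v hv
    have h3 : ∑ i, c i * v i = ∑ i, b i * v i + ∑ i, v i * a i w₀ := by
      rw [← Finset.sum_add_distrib]
      exact Finset.sum_congr rfl fun i _ => by simp [hc]; ring
    rw [h3, hsum0 v hv, add_zero]
  -- key independence fact
  have hkey : ∀ v ∈ V, (∀ i, c i ≠ 0 → v i = 0) → v = 0 := by
    intro v hv hsupp
    have hgw := hgen w₀ hw₀P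
    have hVv := (hV v).1 hv
    have hsplit : ∑ i ∈ Finset.univ.filter (fun i => a i w₀ + b i = 0), v i • a i
        = ∑ i, v i • a i := by
      apply Finset.sum_filter_of_ne
      intro i _ hne
      by_contra hmem
      exact hne (by rw [hsupp i (by simpa [hc] using hmem)]; simp)
    have hsub : ∑ i : {i : Fin m // a i w₀ + b i = 0}, v i.1 • a i.1 = 0 := by
      rw [← Finset.sum_subtype (Finset.univ.filter (fun i => a i w₀ + b i = 0))
        (by simp) (fun i => v i • a i)]
      rw [hsplit, hVv]
    have hz := Fintype.linearIndependent_iff.1 hgw (fun i => v i.1) hsub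
    funext i
    by_cases hci : c i = 0
    · exact hz ⟨i, hci⟩
    · exact hsupp i hci
  -- the functions A, B, F, G
  set A : (Fin m → ℝ) → ℝ := fun v => ∑ i, x i ^ 2 * max (v i) 0 with hA
  set B : (Fin m → ℝ) → ℝ := fun v => -∑ i, c i * v i with hB
  set F : (Fin m → ℝ) → ℝ := fun v => max (A v) (B v) with hF
  set G : (Fin m → ℝ) → ℝ :=
    fun v => ∑ i, (x i ^ 2 * Real.exp (2 * v i) / 2 - c i * v i) with hG
  have hAcont : Continuous A := by
    apply continuous_finset_sum
    intro i _
    exact (continuous_const.mul ((continuous_apply i).max continuous_const))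
  have hBcont : Continuous B := by
    apply Continuous.neg
    apply continuous_finset_sum
    intro i _
    exact continuous_const.mul (continuous_apply i)
  have hFcont : Continuous F := hAcont.max hBcont
  have hGcont : Continuous G := by
    apply continuous_finset_sum
    intro i _
    exact ((continuous_const.mul ((continuous_const.mul
      (continuous_apply i)).rexp)).div_const 2).sub
      (continuous_const.mul (continuous_apply i))
  -- F positive on nonzero elements of V
  have hFpos : ∀ v ∈ V, v ≠ 0 → 0 < F v := by
    intro v hv hne
    by_contra hle
    push_neg at hle
    have hAv : A v ≤ 0 := le_trans (le_max_left _ _) hle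
    have hBv : B v ≤ 0 := le_trans (le_max_right _ _) hle
    have hA0 : ∀ i, x i ≠ 0 → v i ≤ 0 := by
      intro i hxi
      have hterms : ∀ j ∈ Finset.univ, (0:ℝ) ≤ x j ^ 2 * max (v j) 0 := by
        intro j _; positivity
      have := (Finset.sum_eq_zero_iff_of_nonneg hterms).1
        (le_antisymm hAv (Finset.sum_nonneg hterms)) i (Finset.mem_univ i)
      have hx2 : x i ^ 2 ≠ 0 := pow_ne_zero 2 hxi
      have hmax : max (v i) 0 = 0 := by
        rcases mul_eq_zero.1 this with h | h
        · exact absurd h hx2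
        · exact h
      exact max_eq_right_iff.1 hmax
    have htermle : ∀ i ∈ Finset.univ, c i * v i ≤ 0 := by
      intro i _
      by_cases hxi : x i = 0
      · rw [hcZ i hxi, zero_mul]
      · exact mul_nonpos_of_nonneg_of_nonpos (hc0 i) (hA0 i hxi)
    have hsumle : ∑ i, c i * v i ≤ 0 := Finset.sum_nonpos htermle
    have hsumge : 0 ≤ ∑ i, c i * v i := by
      have : -∑ i, c i * v i ≤ 0 := hBv
      linarith
    have heach : ∀ i ∈ Finset.univ, -(c i * v i) = 0 := by
      apply (Finset.sum_eq_zero_iff_of_nonneg (fun i _ => by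
        simpa using htermle i (Finset.mem_univ i))).1
      simp only [Finset.sum_neg_distrib]
      linarith [le_antisymm hsumle hsumge]
    apply hne
    apply hkey v hv
    intro i hci
    have h0 := heach i (Finset.mem_univ i)
    have : c i * v i = 0 := by linarith
    rcases mul_eq_zero.1 this with h | h
    · exact absurd h hci
    · exact h
  -- homogeneity of F
  have hFhom : ∀ (t : ℝ), 0 ≤ t → ∀ v, F (t • v) = t * F v := by
    intro t ht v
    have hAh : A (t • v) = t * A v := by
      simp only [hA, Finset.mul_sum]
      refine Finset.sum_congr rfl fun i _ => ?_
      simp only [Pi.smul_apply, smul_eq_mul]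
      rcases le_total (v i) 0 with h | h
      · rw [max_eq_right h, max_eq_right (mul_nonpos_of_nonneg_of_nonpos ht h)]
        ring
      · rw [max_eq_left h, max_eq_left (mul_nonneg ht h)]
        ring
    have hBh : B (t • v) = t * B v := by
      simp only [hB, Finset.mul_sum, ← Finset.sum_neg_distrib]
      refine Finset.sum_congr rfl fun i _ => ?_
      simp only [Pi.smul_apply, smul_eq_mul]
      ring
    show A (t • v) ⊔ B (t • v) = t * (A v ⊔ B v)
    rw [hAh, hBh, mul_max_of_nonneg _ _ ht]
  -- get ε
  have hVclosed : IsClosed (V : Set (Fin m → ℝ)) := Submodule.closed_of_finiteDimensional V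
  obtain ⟨ε, hεpos, hεbound⟩ : ∃ ε > 0, ∀ v ∈ V, ε * ‖v‖ ≤ F v := by
    set S := (V : Set (Fin m → ℝ)) ∩ Metric.sphere 0 1 with hS
    have hScpt : IsCompact S := (isCompact_sphere 0 1).inter_left hVclosed
    by_cases hSne : S.Nonempty
    · obtain ⟨v₁, hv₁S, hmin⟩ := hScpt.exists_isMinOn hSne hFcont.continuousOn
      have hv₁norm : ‖v₁‖ = 1 := mem_sphere_zero_iff_norm.1 hv₁S.2
      have hv₁ne : v₁ ≠ 0 := by
        intro h; rw [h, norm_zero] at hv₁norm; exact one_ne_zero hv₁norm.symm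
      refine ⟨F v₁, hFpos v₁ hv₁S.1 hv₁ne, ?_⟩
      intro v hv
      rcases eq_or_ne v 0 with rfl | hvne
      · simp [hF, hA, hB]
      · have hn : 0 < ‖v‖ := norm_pos_iff.2 hvne
        set u : Fin m → ℝ := ‖v‖⁻¹ • v with hu
        have huV : u ∈ V := V.smul_mem _ hv
        have hunorm : ‖u‖ = 1 := by
          rw [hu, norm_smul, norm_inv, norm_norm, inv_mul_cancel₀ hn.ne']
        have huS : u ∈ S := ⟨huV, mem_sphere_zero_iff_norm.2 hunorm⟩
        have h1 : F v₁ ≤ F u := hmin huS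
        have hvu : ‖v‖ • u = v := by
          rw [hu, smul_smul, mul_inv_cancel₀ hn.ne', one_smul]
        have h2 : F v = ‖v‖ * F u := by
          conv_lhs => rw [← hvu]
          rw [hFhom _ hn.le]
        rw [h2]
        calc F v₁ * ‖v‖ ≤ F u * ‖v‖ := mul_le_mul_of_nonneg_right h1 (norm_nonneg v)
          _ = ‖v‖ * F u := by ring
    · refine ⟨1, one_pos, ?_⟩
      intro v hv
      rcases eq_or_ne v 0 with rfl | hvne
      · simp [hF, hA, hB]
      · exfalso
        apply hSne
        have hn : 0 < ‖v‖ := norm_pos_iff.2 hvne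
        refine ⟨‖v‖⁻¹ • v, V.smul_mem _ hv, mem_sphere_zero_iff_norm.2 ?_⟩
        rw [norm_smul, norm_inv, norm_norm, inv_mul_cancel₀ hn.ne']
  -- lower bound for G
  set Cc : ℝ := ∑ i, c i with hCc
  have hCc0 : 0 ≤ Cc := Finset.sum_nonneg fun i _ => hc0 i
  set K : ℝ := (Cc + 1) / ε with hK
  have hK0 : 0 ≤ K := by positivity
  set C' : ℝ := ∑ i, 2 * K ^ 2 * x i ^ 2 with hC'
  have hC'0 : 0 ≤ C' := Finset.sum_nonneg fun i _ => by positivity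
  have hcv : ∀ v : Fin m → ℝ, ∑ i, c i * v i ≤ Cc * ‖v‖ := by
    intro v
    rw [hCc, Finset.sum_mul]
    apply Finset.sum_le_sum
    intro i _
    calc c i * v i ≤ c i * ‖v‖ := by
          apply mul_le_mul_of_nonneg_left _ (hc0 i)
          calc v i ≤ |v i| := le_abs_self _
            _ = ‖v i‖ := (Real.norm_eq_abs _).symm
            _ ≤ ‖v‖ := norm_le_pi_norm v i
      _ = c i * ‖v‖ := rfl
  have hGlb : ∀ v ∈ V, min ε 1 * ‖v‖ - C' ≤ G v := by
    intro v hv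
    have hFv := hεbound v hv
    rw [hF] at hFv
    rcases le_max_iff.1 hFv with hcase | hcase
    · -- ε‖v‖ ≤ A v
      have h1 : K * A v - C' - ∑ i, c i * v i ≤ G v := by
        have hle : ∑ i, (K * (x i ^ 2 * max (v i) 0) - 2 * K ^ 2 * x i ^ 2 - c i * v i)
            ≤ ∑ i, (x i ^ 2 * Real.exp (2 * v i) / 2 - c i * v i) := by
          apply Finset.sum_le_sum
          intro i _
          nlinarith [aux_exp_lower K (v i), sq_nonneg (x i)]
        calc K * A v - C' - ∑ i, c i * v i
            = ∑ i, (K * (x i ^ 2 * max (v i) 0) - 2 * K ^ 2 * x i ^ 2 - c i * v i) := by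
              simp only [hA, hC', Finset.mul_sum, Finset.sum_sub_distrib]
          _ ≤ ∑ i, (x i ^ 2 * Real.exp (2 * v i) / 2 - c i * v i) := hle
          _ = G v := rfl
      have h2 : ∑ i, c i * v i ≤ Cc * ‖v‖ := hcv v
      have h3 : K * (ε * ‖v‖) ≤ K * A v := mul_le_mul_of_nonneg_left hcase hK0
      have h4 : K * ε = Cc + 1 := by
        rw [hK, div_mul_cancel₀ _ hεpos.ne']
      have h5 : min ε 1 ≤ 1 := min_le_right _ _
      have h6 : 0 ≤ ‖v‖ := norm_nonneg v
      nlinarith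
    · -- ε‖v‖ ≤ B v
      have h1 : B v ≤ G v := by
        simp only [hG, hB, Finset.sum_sub_distrib]
        have : ∀ i ∈ Finset.univ, (0:ℝ) ≤ x i ^ 2 * Real.exp (2 * v i) / 2 := by
          intro i _; positivity
        have h7 := Finset.sum_nonneg this
        linarith
      have h5 : min ε 1 ≤ ε := min_le_left _ _
      have h6 : 0 ≤ ‖v‖ := norm_nonneg v
      nlinarith
  -- minimizer of G over V
  set R : ℝ := (G 0 + C') / min ε 1 + 1 with hR
  have hG0 : 0 ≤ G 0 := by
    have hG0' : G 0 = ∑ i, x i ^ 2 / 2 := by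
      simp only [hG]
      exact Finset.sum_congr rfl fun i _ => by simp
    rw [hG0']
    positivity
  have hε' : 0 < min ε 1 := lt_min hεpos one_pos
  have hRpos : 0 < R := by
    have h1 : 0 ≤ (G 0 + C') / min ε 1 := div_nonneg (by linarith) hε'.le
    rw [hR]; linarith
  have hGRout : ∀ v ∈ V, R ≤ ‖v‖ → G 0 < G v := by
    intro v hv hnorm
    have h1 := hGlb v hv
    have h2 : min ε 1 * R ≤ min ε 1 * ‖v‖ := mul_le_mul_of_nonneg_left hnorm hε'.le
    have h3 : min ε 1 * ((G 0 + C') / min ε 1) = G 0 + C' :=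
      mul_div_cancel₀ _ hε'.ne'
    have h4 : min ε 1 * R = G 0 + C' + min ε 1 := by
      rw [hR, mul_add, mul_one, h3]
    linarith
  set Kset := (V : Set (Fin m → ℝ)) ∩ Metric.closedBall 0 R with hKset
  have hKcpt : IsCompact Kset := (isCompact_closedBall 0 R).inter_left hVclosed
  have h0mem : (0 : Fin m → ℝ) ∈ Kset :=
    ⟨V.zero_mem, by simp [hRpos.le]⟩
  obtain ⟨vs, hvsmem, hvsmin⟩ := hKcpt.exists_isMinOn ⟨0, h0mem⟩ hGcont.continuousOn
  have hvsV : vs ∈ V := hvsmem.1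
  have hglobal : ∀ v ∈ V, G vs ≤ G v := by
    intro v hv
    rcases le_or_gt ‖v‖ R with h | h
    · exact hvsmin ⟨hv, by simpa [Metric.mem_closedBall, dist_zero_right] using h⟩
    · calc G vs ≤ G 0 := hvsmin h0mem
        _ ≤ G v := (hGRout v hv h.le).le
  -- first order condition
  have hcrit : ∀ u ∈ V, ∑ i, (x i ^ 2 * Real.exp (2 * vs i) - c i) * u i = 0 := by
    intro u hu
    set φ : ℝ → ℝ := fun t => ∑ i,
      (x i ^ 2 * Real.exp (2 * (vs i + t * u i)) / 2 - c i * (vs i + t * u i)) with hφ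
    have hφG : ∀ t, φ t = G (vs + t • u) := by
      intro t
      rw [hφ, hG]
      exact Finset.sum_congr rfl fun i _ => by simp
    have hmin : IsLocalMin φ 0 := by
      apply Filter.Eventually.of_forall
      intro t
      rw [hφG, hφG]
      simp only [zero_smul, add_zero]
      exact hglobal _ (V.add_mem hvsV (V.smul_mem t hu))
    have hd : HasDerivAt φ
        (∑ i, (x i ^ 2 * (Real.exp (2 * vs i) * (2 * u i)) / 2 - c i * u i)) 0 := by
      apply HasDerivAt.fun_sum
      intro i _
      have h1 : HasDerivAt (fun t : ℝ => vs i + t * u i) (u i) 0 := by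
        simpa using ((hasDerivAt_id (0:ℝ)).mul_const (u i)).const_add (vs i)
      have h2 : HasDerivAt (fun t : ℝ => 2 * (vs i + t * u i)) (2 * u i) 0 :=
        h1.const_mul 2
      have h3 : HasDerivAt (fun t : ℝ => Real.exp (2 * (vs i + t * u i)))
          (Real.exp (2 * (vs i + 0 * u i)) * (2 * u i)) 0 := h2.exp
      have h4 := ((h3.const_mul (x i ^ 2)).div_const 2).fun_sub (h1.const_mul (c i))
      simpa using h4
    have hzero := hmin.hasDerivAt_eq_zero hd
    rw [← hzero]
    exact Finset.sum_congr rfl fun i _ => by ring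
  -- assemble
  set y : Fin m → ℝ := fun i => Real.exp (vs i) * x i with hy
  have hysq : ∀ i, y i ^ 2 = x i ^ 2 * Real.exp (2 * vs i) := by
    intro i
    rw [hy]
    rw [show (2:ℝ) * vs i = vs i + vs i by ring, Real.exp_add]
    ring
  have hyeq : ∑ i, y i ^ 2 • γ i = ∑ i, b i • γ i := by
    refine ContinuousLinearMap.ext fun u => ?_
    simp only [ContinuousLinearMap.sum_apply, ContinuousLinearMap.smul_apply,
      smul_eq_mul, hγ]
    have hcu := hcrit (u : Fin m → ℝ) u.2
    have hbcu := hbc (u : Fin m → ℝ) u.2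
    have h1 : ∑ i, y i ^ 2 * (u : Fin m → ℝ) i
        = ∑ i, (x i ^ 2 * Real.exp (2 * vs i)) * (u : Fin m → ℝ) i :=
      Finset.sum_congr rfl fun i _ => by rw [hysq i]
    have h2 : ∑ i, (x i ^ 2 * Real.exp (2 * vs i)) * (u : Fin m → ℝ) i
        = ∑ i, c i * (u : Fin m → ℝ) i := by
      have h3 : ∑ i, ((x i ^ 2 * Real.exp (2 * vs i)) * (u : Fin m → ℝ) i
          - c i * (u : Fin m → ℝ) i) = 0 := by
        rw [← hcu]
        exact Finset.sum_congr rfl fun i _ => by ring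
      rw [Finset.sum_sub_distrib] at h3
      linarith
    rw [h1, h2, ← hbcu]
  refine ⟨y, ⟨⟨vs, hvsV, fun i => rfl⟩, hyeq⟩, ?_⟩
  -- uniqueness
  rintro y' ⟨⟨v', hv'V, hy'⟩, heq'⟩
  have hu : v' - vs ∈ V := V.sub_mem hv'V hvsV
  have hdiff : ∑ i, (y' i ^ 2 - y i ^ 2) * (v' i - vs i) = 0 := by
    have h1 : ∑ i, y' i ^ 2 • γ i = ∑ i, y i ^ 2 • γ i := heq'.trans hyeq.symm
    have h2 := congrArg (fun L : V →L[ℝ] ℝ => L ⟨v' - vs, hu⟩) h1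
    simp only [ContinuousLinearMap.sum_apply, ContinuousLinearMap.smul_apply,
      smul_eq_mul, hγ] at h2
    have h3 : ∑ i, (y' i ^ 2 - y i ^ 2) * (v' i - vs i)
        = ∑ i, y' i ^ 2 * (v' i - vs i) - ∑ i, y i ^ 2 * (v' i - vs i) := by
      rw [← Finset.sum_sub_distrib]
      exact Finset.sum_congr rfl fun i _ => by ring
    have h2' : ∑ i, y' i ^ 2 * (v' i - vs i) = ∑ i, y i ^ 2 * (v' i - vs i) := h2
    rw [h3, h2', sub_self]
  have hterm : ∀ i ∈ Finset.univ, (0:ℝ) ≤ (y' i ^ 2 - y i ^ 2) * (v' i - vs i) := by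
    intro i _
    rw [← hy' i, hy]
    have hsq : ∀ s t : ℝ, 0 ≤ ((Real.exp s * x i) ^ 2 - (Real.exp t * x i) ^ 2) * (s - t) := by
      intro s t
      have h1 : (Real.exp s * x i) ^ 2 - (Real.exp t * x i) ^ 2
          = (Real.exp (2*s) - Real.exp (2*t)) * x i ^ 2 := by
        rw [show (2:ℝ)*s = s + s by ring, show (2:ℝ)*t = t + t by ring,
          Real.exp_add, Real.exp_add]
        ring
      rw [h1]
      rcases le_total s t with h | h
      · have he : Real.exp (2*s) ≤ Real.exp (2*t) := Real.exp_le_exp.2 (by linarith)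
        have key : 0 ≤ ((Real.exp (2*t) - Real.exp (2*s)) * x i ^ 2) * (t - s) :=
          mul_nonneg (mul_nonneg (by linarith) (sq_nonneg _)) (by linarith)
        nlinarith [key]
      · have he : Real.exp (2*t) ≤ Real.exp (2*s) := Real.exp_le_exp.2 (by linarith)
        have key : 0 ≤ ((Real.exp (2*s) - Real.exp (2*t)) * x i ^ 2) * (s - t) :=
          mul_nonneg (mul_nonneg (by linarith) (sq_nonneg _)) (by linarith)
        nlinarith [key]
    exact hsq (v' i) (vs i)
  have hall := (Finset.sum_eq_zero_iff_of_nonneg hterm).1 hdiff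
  funext i
  rcases eq_or_ne (x i) 0 with hxi | hxi
  · rw [← hy' i]
    simp only [hy]
    rw [hxi, mul_zero, mul_zero]
  · have h0 := hall i (Finset.mem_univ i)
    rw [← hy' i] at h0 ⊢
    simp only [hy] at h0 ⊢
    rcases eq_or_ne (v' i) (vs i) with hv | hv
    · rw [hv]
    · exfalso
      have h1 : (Real.exp (v' i) * x i) ^ 2 - (Real.exp (vs i) * x i) ^ 2 ≠ 0 := by
        intro hcon
        have h2 : (Real.exp (v' i)) ^ 2 * x i ^ 2 = (Real.exp (vs i)) ^ 2 * x i ^ 2 := by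
          nlinarith [hcon]
        have h3 : (Real.exp (v' i)) ^ 2 = (Real.exp (vs i)) ^ 2 :=
          mul_right_cancel₀ (pow_ne_zero 2 hxi) h2
        have h4 : Real.exp (2 * v' i) = Real.exp (2 * vs i) := by
          rw [show (2:ℝ) * v' i = v' i + v' i by ring,
            show (2:ℝ) * vs i = vs i + vs i by ring, Real.exp_add, Real.exp_add]
          rw [← sq, ← sq]
          exact h3
        have h5 := Real.exp_injective h4
        exact hv (by linarith)
      exact h1 (by
        rcases mul_eq_zero.1 h0 with h | h
        · exact h
        · exact absurd (sub_eq_zero.1 h) hv)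
end
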